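/- arXiv:1609.05863 — 8 statements merged into one kernel-verified Lean document; each statement's English description precedes it below -/
import Mathlib

section
/- For all integers n ≥ 1 and m ≥ 1, the integral ∫₀¹ t^{n-1} (ln(1-t))^m dt equals (-1)^m · m! / n times the multiple harmonic star number ζ*_n({1}_m) = ∑_{n ≥ k₁ ≥ k₂ ≥ ⋯ ≥ k_m ≥ 1} 1/(k₁k₂⋯k_m). -/
open Real Filter MeasureTheory intervalIntegral Finset

/-- Multiple harmonic star number (weakly decreasing indices). -/
noncomputable def mhStar : List ℝ → ℕ → ℝ
  | [], _ => 1
  | s :: t, n => ∑ k ∈ Finset.Icc 1 n, (1 / (k : ℝ) ^ s) * mhStar t k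

lemma tendsto_pow_mul_log_pow (j m : ℕ) :
    Tendsto (fun x : ℝ => x ^ (j+1) * Real.log x ^ m) (nhdsWithin 0 (Set.Ioi 0)) (nhds 0) := by
  rcases Nat.eq_zero_or_pos m with hm | hm
  · subst hm
    simpa using (continuous_pow (j+1)).tendsto' 0 0 (by simp) |>.mono_left nhdsWithin_le_nhds
  · have h := (tendsto_log_mul_rpow_nhdsGT_zero
      (r := (j+1)/m) (by positivity)).pow m
    rw [zero_pow hm.ne'] at h
    refine h.congr' ?_
    filter_upwards [self_mem_nhdsWithin] with x (hx : 0 < x)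
    have hm' : (m:ℝ) ≠ 0 := by exact_mod_cast hm.ne'
    rw [mul_pow, ← Real.rpow_natCast (x ^ (((j:ℝ)+1)/m)) m, ← Real.rpow_mul hx.le,
      div_mul_cancel₀ _ hm', show ((j:ℝ)+1) = ((j+1:ℕ):ℝ) by push_cast; ring,
      Real.rpow_natCast, mul_comm]

lemma log_pow_bound {x : ℝ} (hx : 0 < x) (hx1 : x ≤ 1) (m : ℕ) :
    (-Real.log x) ^ m ≤ (2*m) ^ m * x ^ (-(1/2) : ℝ) := by
  rcases Nat.eq_zero_or_pos m with hm | hm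
  · subst hm
    simpa using Real.one_le_rpow_of_pos_of_le_one_of_nonpos hx hx1 (by norm_num)
  · set y : ℝ := x ^ ((1 : ℝ)/(2*m)) with hy
    have hy0 : 0 < y := Real.rpow_pos_of_pos hx _
    have hlog : Real.log y = (1/(2*m)) * Real.log x := Real.log_rpow hx _
    have hb : -Real.log x ≤ 2*m * y⁻¹ := by
      have h1 : -Real.log y ≤ y⁻¹ := by
        have := Real.log_le_sub_one_of_pos (inv_pos.mpr hy0)
        rw [Real.log_inv] at this
        linarith
      have hm0 : (0:ℝ) < 2*m := by positivity
      have : -Real.log x = 2*m * (-Real.log y) := by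
        rw [hlog]; field_simp
      rw [this]
      exact mul_le_mul_of_nonneg_left h1 hm0.le
    have hnn : 0 ≤ -Real.log x := by
      simpa using Real.log_nonpos hx.le hx1
    calc (-Real.log x) ^ m ≤ (2*m * y⁻¹) ^ m := pow_le_pow_left₀ hnn hb m
      _ = (2*m)^m * (y⁻¹)^m := mul_pow _ _ _
      _ = (2*m)^m * x ^ (-(1/2) : ℝ) := by
          congr 1
          rw [← Real.rpow_neg hx.le, ← Real.rpow_natCast (x ^ (-(1/(2*(m:ℝ))))) m,
            ← Real.rpow_mul hx.le]
          congr 1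
          have : (m:ℝ) ≠ 0 := by exact_mod_cast hm.ne'
          field_simp

lemma intInt_pow_mul_log (j m : ℕ) :
    IntervalIntegrable (fun x : ℝ => x ^ j * Real.log x ^ m) volume 0 1 := by
  have hmeas : AEStronglyMeasurable (fun x : ℝ => x ^ j * Real.log x ^ m)
      (volume.restrict (Set.uIoc (0:ℝ) 1)) :=
    ((measurable_id.pow_const j).mul (Real.measurable_log.pow_const m)).aestronglyMeasurable
  have hg : IntervalIntegrable (fun x : ℝ => (2*m)^m * x ^ (-(1/2) : ℝ)) volume 0 1 :=
    (intervalIntegrable_rpow' (by norm_num)).const_mul _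
  refine hg.mono_fun hmeas ?_
  filter_upwards [ae_restrict_mem measurableSet_uIoc] with x hx
  rw [Set.uIoc_of_le (by norm_num : (0:ℝ) ≤ 1)] at hx
  obtain ⟨hx0, hx1⟩ := hx
  have hb := log_pow_bound hx0 hx1 m
  have h1 : ‖x ^ j * Real.log x ^ m‖ ≤ (-Real.log x) ^ m := by
    rw [norm_mul, norm_pow, norm_pow]
    have : ‖Real.log x‖ = -Real.log x := by
      rw [Real.norm_eq_abs, abs_of_nonpos (Real.log_nonpos hx0.le hx1)]
    rw [this]
    have hxj : ‖x‖ ^ j ≤ 1 := by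
      rw [Real.norm_eq_abs, abs_of_pos hx0]
      exact pow_le_one₀ hx0.le hx1
    nlinarith [pow_nonneg (neg_nonneg.mpr (Real.log_nonpos hx0.le hx1)) m,
      pow_nonneg (norm_nonneg x) j]
  refine h1.trans (hb.trans (le_of_eq ?_))
  rw [Real.norm_eq_abs, abs_of_nonneg (by positivity)]

lemma integral_pow_mul_log (j m : ℕ) :
    ∫ x in (0:ℝ)..1, x ^ j * Real.log x ^ m
      = (-1 : ℝ) ^ m * m.factorial / (j+1) ^ (m+1) := by
  induction m with
  | zero => simp [integral_pow]
  | succ m ih =>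
    set g : ℝ → ℝ := fun x => x ^ (j+1) * Real.log x ^ (m+1) with hg
    set g' : ℝ → ℝ := fun x =>
      (j+1) * (x ^ j * Real.log x ^ (m+1)) + (m+1) * (x ^ j * Real.log x ^ m) with hg'
    have hcont : ContinuousOn g (Set.Icc 0 1) := by
      intro x hx
      rcases eq_or_lt_of_le hx.1 with h0 | h0
      · rw [← h0, ← continuousWithinAt_diff_self, ContinuousWithinAt]
        have hgz : g 0 = 0 := by simp [hg]
        rw [hgz]
        refine (tendsto_pow_mul_log_pow j (m+1)).mono_left (nhdsWithin_mono _ ?_)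
        exact fun y hy => lt_of_le_of_ne hy.1.1 (fun h => hy.2 h.symm)
      · exact (((continuous_pow (j+1)).continuousAt.mul
          (((Real.continuousAt_log h0.ne').pow (m+1)))).continuousWithinAt)
    have hderiv : ∀ x ∈ Set.Ioo (0:ℝ) 1, HasDerivWithinAt g (g' x) (Set.Ioi x) x := by
      intro x hx
      have hx0 : x ≠ 0 := hx.1.ne'
      have h1 : HasDerivAt g ((j+1) * x ^ j * Real.log x ^ (m+1)
          + x ^ (j+1) * ((m+1) * Real.log x ^ m * x⁻¹)) x := by
        have hp : HasDerivAt (fun x : ℝ => x ^ (j+1)) ((j+1) * x ^ j) x := by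
          simpa using hasDerivAt_pow (j+1) x
        have hl : HasDerivAt (fun x : ℝ => Real.log x ^ (m+1))
            ((m+1) * Real.log x ^ m * x⁻¹) x := by
          simpa using ((Real.hasDerivAt_log hx0).fun_pow (m+1))
        simpa [hg] using hp.fun_mul hl
      have : (j+1) * x ^ j * Real.log x ^ (m+1)
          + x ^ (j+1) * ((m+1) * Real.log x ^ m * x⁻¹) = g' x := by
        rw [hg']
        field_simp
        ring
      rw [← this]
      exact h1.hasDerivWithinAt
    have hint : IntervalIntegrable g' volume 0 1 :=
      ((intInt_pow_mul_log j (m+1)).const_mul _).add ((intInt_pow_mul_log j m).const_mul _)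
    have hFTC := intervalIntegral.integral_eq_sub_of_hasDeriv_right_of_le (by norm_num)
      hcont hderiv hint
    have hg1 : g 1 = 0 := by simp [hg]
    have hg0 : g 0 = 0 := by simp [hg]
    rw [hg1, hg0, sub_zero] at hFTC
    have hsplit : ∫ x in (0:ℝ)..1, g' x
        = ((j+1) * ∫ x in (0:ℝ)..1, x ^ j * Real.log x ^ (m+1))
          + ((m+1) * ∫ x in (0:ℝ)..1, x ^ j * Real.log x ^ m) := by
      rw [hg']
      rw [intervalIntegral.integral_add ((intInt_pow_mul_log j (m+1)).const_mul _)
        ((intInt_pow_mul_log j m).const_mul _),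
        intervalIntegral.integral_const_mul, intervalIntegral.integral_const_mul]
    rw [hsplit, ih] at hFTC
    have hj : ((j:ℝ)+1) ≠ 0 := by positivity
    have hjp : ((j:ℝ)+1) ^ (m+1) ≠ 0 := by positivity
    have : (((j:ℝ))+1) * ∫ x in (0:ℝ)..1, x ^ j * Real.log x ^ (m+1)
        = -((m+1) * ((-1:ℝ)^m * m.factorial / (j+1)^(m+1))) := by linear_combination hFTC
    have h2 : ∫ x in (0:ℝ)..1, x ^ j * Real.log x ^ (m+1)
        = -((m+1) * ((-1:ℝ)^m * m.factorial / (j+1)^(m+1))) / (j+1) := by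
      rw [eq_div_iff hj]
      linear_combination this
    rw [h2, Nat.factorial_succ]
    push_cast
    field_simp
    ring

lemma sum_Icc_shift (f : ℕ → ℝ) (a b : ℕ) :
    ∑ k ∈ Finset.Icc (a+1) (b+1), f k = ∑ i ∈ Finset.Icc a b, f (i+1) := by
  rw [← Finset.image_add_right_Icc, Finset.sum_image]
  intro x _ y _ h
  simp only at h
  omega

lemma dilcher : ∀ (m n : ℕ), 1 ≤ n →
    mhStar (List.replicate m 1) n
      = ∑ j ∈ Finset.Icc 1 n, (-1:ℝ)^(j-1) * (n.choose j) / (j:ℝ)^m := by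
  intro m
  induction m with
  | zero =>
    intro n hn
    have key : ∑ i ∈ Finset.range (n+1), (-1:ℝ)^i * (n.choose i) = 0 := by
      have h := Int.alternating_sum_range_choose_of_ne (by omega : n ≠ 0)
      have h2 := congrArg (fun z : ℤ => (z : ℝ)) h
      push_cast at h2
      simpa using h2
    rw [Finset.sum_range_succ'] at key
    simp only [pow_zero, one_mul, Nat.choose_zero_right, Nat.cast_one] at key
    have key2 : ∑ i ∈ Finset.range n, (-1:ℝ)^i * (n.choose (i+1)) = 1 := by
      have h3 : ∑ i ∈ Finset.range n, (-1:ℝ)^(i+1) * (n.choose (i+1))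
          = -∑ i ∈ Finset.range n, (-1:ℝ)^i * (n.choose (i+1)) := by
        rw [← Finset.sum_neg_distrib]
        exact Finset.sum_congr rfl fun i _ => by ring
      rw [h3] at key
      linarith
    show (1:ℝ) = _
    have hIcc : Finset.Icc 1 n = Finset.Icc (0+1) ((n-1)+1) := by congr 1; omega
    rw [hIcc, sum_Icc_shift, ← Nat.range_eq_Icc_zero_sub_one _ (by omega)]
    simp only [Nat.add_sub_cancel, pow_zero, div_one]
    exact key2.symm
  | succ m ih =>
    intro n hn
    have hunfold : mhStar (List.replicate (m+1) 1) n
        = ∑ k ∈ Finset.Icc 1 n, (1 / (k:ℝ) ^ (1:ℝ)) * mhStar (List.replicate m 1) k := rfl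
    rw [hunfold]
    have step1 : ∀ k ∈ Finset.Icc 1 n, (1 / (k:ℝ) ^ (1:ℝ)) * mhStar (List.replicate m 1) k
        = ∑ j ∈ Finset.Icc 1 k, (1/(k:ℝ)) * ((-1:ℝ)^(j-1) * (k.choose j) / (j:ℝ)^m) := by
      intro k hk
      obtain ⟨hk1, _⟩ := Finset.mem_Icc.mp hk
      rw [ih k hk1, Real.rpow_one, Finset.mul_sum]
    rw [Finset.sum_congr rfl step1]
    rw [Finset.sum_comm' (s := Finset.Icc 1 n) (t := fun k => Finset.Icc 1 k)
      (s' := fun j => Finset.Icc j n) (t' := Finset.Icc 1 n)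
      (by intro k j; simp only [Finset.mem_Icc]; omega)]
    refine Finset.sum_congr rfl fun j hj => ?_
    obtain ⟨hj1, hj2⟩ := Finset.mem_Icc.mp hj
    have hj0 : (j:ℝ) ≠ 0 := Nat.cast_ne_zero.mpr (by omega)
    have hinner : ∀ k ∈ Finset.Icc j n, (1/(k:ℝ)) * ((-1:ℝ)^(j-1) * (k.choose j) / (j:ℝ)^m)
        = ((-1:ℝ)^(j-1) / (j:ℝ)^m / j) * (((k-1).choose (j-1) : ℕ) : ℝ) := by
      intro k hk
      obtain ⟨hkj, hkn⟩ := Finset.mem_Icc.mp hk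
      have hk1 : 1 ≤ k := le_trans hj1 hkj
      have hid : k * ((k-1).choose (j-1)) = k.choose j * j := by
        have h := Nat.add_one_mul_choose_eq (k-1) (j-1)
        have e1 : k - 1 + 1 = k := by omega
        have e2 : j - 1 + 1 = j := by omega
        rwa [e1, e2] at h
      have hidR : (k:ℝ) * (((k-1).choose (j-1) : ℕ) : ℝ) = ((k.choose j : ℕ) : ℝ) * j := by
        exact_mod_cast congrArg (Nat.cast : ℕ → ℝ) hid
      have hk0 : (k:ℝ) ≠ 0 := Nat.cast_ne_zero.mpr (by omega)
      have hjm : (j:ℝ)^m ≠ 0 := pow_ne_zero _ hj0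
      field_simp
      linear_combination (-1:ℝ) * hidR
    rw [Finset.sum_congr rfl hinner, ← Finset.mul_sum]
    have hsum : ∑ k ∈ Finset.Icc j n, (((k-1).choose (j-1) : ℕ) : ℝ) = ((n.choose j : ℕ) : ℝ) := by
      have h1 : Finset.Icc j n = Finset.Icc ((j-1)+1) ((n-1)+1) := by congr 1 <;> omega
      rw [h1, sum_Icc_shift]
      simp only [Nat.add_sub_cancel]
      rw [← Nat.cast_sum]
      norm_cast
      rw [Nat.sum_Icc_choose]
      congr 1 <;> omega
    rw [hsum, pow_succ]
    field_simp

theorem stmt_0 (n m : ℕ) (hn : 1 ≤ n) (hm : 1 ≤ m) :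
    ∫ t in (0:ℝ)..1, t ^ (n - 1) * (Real.log (1 - t)) ^ m
      = (-1 : ℝ) ^ m * (Nat.factorial m) / n * mhStar (List.replicate m 1) n := by
  have hn0 : (n:ℝ) ≠ 0 := Nat.cast_ne_zero.mpr (by omega)
  -- substitution x = 1 - t
  have hsub : (∫ t in (0:ℝ)..1, t ^ (n - 1) * (Real.log (1 - t)) ^ m)
      = ∫ x in (0:ℝ)..1, (1-x) ^ (n-1) * (Real.log x) ^ m := by
    have h := intervalIntegral.integral_comp_sub_left (a := (0:ℝ)) (b := 1)
      (fun x => (1-x) ^ (n-1) * (Real.log x) ^ m) 1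
    norm_num at h
    rw [← h]
  rw [hsub]
  -- binomial expansion
  have hexp : ∀ x : ℝ, (1-x) ^ (n-1) * (Real.log x) ^ m
      = ∑ i ∈ Finset.range n, ((-1:ℝ)^i * ((n-1).choose i)) * (x^i * (Real.log x)^m) := by
    intro x
    have h1 : (1-x) ^ (n-1) = ((-x) + 1) ^ (n-1) := by ring_nf
    rw [h1, add_pow]
    have h2 : n - 1 + 1 = n := by omega
    rw [h2, Finset.sum_mul]
    refine Finset.sum_congr rfl fun i _ => ?_
    rw [one_pow, neg_pow]
    ring
  rw [intervalIntegral.integral_congr (g := fun x =>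
      ∑ i ∈ Finset.range n, ((-1:ℝ)^i * ((n-1).choose i)) * (x^i * (Real.log x)^m))
      (fun x _ => hexp x)]
  rw [intervalIntegral.integral_finset_sum
      (fun i _ => (intInt_pow_mul_log i m).const_mul _)]
  have hterm : ∀ i ∈ Finset.range n,
      (∫ x in (0:ℝ)..1, ((-1:ℝ)^i * ((n-1).choose i)) * (x^i * (Real.log x)^m))
      = ((-1:ℝ)^i * ((n-1).choose i)) * ((-1:ℝ)^m * m.factorial / ((i:ℝ)+1)^(m+1)) := by
    intro i _
    rw [intervalIntegral.integral_const_mul, integral_pow_mul_log]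
  rw [Finset.sum_congr rfl hterm, dilcher m n hn]
  -- reindex RHS sum over Icc 1 n to range n
  have hIcc : Finset.Icc 1 n = Finset.Icc (0+1) ((n-1)+1) := by congr 1; omega
  rw [hIcc, sum_Icc_shift, ← Nat.range_eq_Icc_zero_sub_one _ (by omega), Finset.mul_sum]
  refine Finset.sum_congr rfl fun i hi => ?_
  have hchoose : n * ((n-1).choose i) = n.choose (i+1) * (i+1) := by
    have h := Nat.add_one_mul_choose_eq (n-1) i
    have e1 : n - 1 + 1 = n := by omega
    rwa [e1] at h
  have hchooseR : (n:ℝ) * (((n-1).choose i : ℕ) : ℝ) = ((n.choose (i+1) : ℕ) : ℝ) * ((i:ℝ)+1) := by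
    exact_mod_cast congrArg (Nat.cast : ℕ → ℝ) hchoose
  have hi0 : ((i:ℝ)+1) ≠ 0 := by positivity
  have hi1 : ((i:ℝ)+1) ^ (m+1) ≠ 0 := by positivity
  simp only [Nat.add_sub_cancel]
  push_cast
  rw [pow_succ]
  field_simp
  linear_combination hchooseR
end

section
/- For all integers n ≥ 1, ∫₀¹ x^{n-1} (ln(1-x))² dx = (H_n² + ζ_n(2))/n, where H_n is the n-th harmonic number and ζ_n(2) = ∑_{j=1}^n 1/j². -/
open Real Set Filter Finset MeasureTheory intervalIntegral Topology



lemma aux_log_bound {t : ℝ} (ht : 0 < t) (ht1 : t ≤ 1) :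
    |Real.log t| ≤ 4 * t ^ (-(2:ℝ)⁻¹) := by
  have h1 : Real.log t ≤ 0 := Real.log_nonpos ht.le ht1
  rw [abs_of_nonpos h1]
  have h2 := Real.log_le_rpow_div (x := t⁻¹) (ε := 4⁻¹) (by positivity) (by norm_num)
  rw [Real.log_inv, Real.inv_rpow ht.le, ← Real.rpow_neg ht.le] at h2
  have h3 : t ^ (-(4:ℝ)⁻¹) ≤ t ^ (-(2:ℝ)⁻¹) :=
    Real.rpow_le_rpow_of_exponent_ge ht ht1 (by norm_num)
  calc -Real.log t ≤ t ^ (-(4:ℝ)⁻¹) / 4⁻¹ := h2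
    _ = 4 * t ^ (-(4:ℝ)⁻¹) := by ring
    _ ≤ 4 * t ^ (-(2:ℝ)⁻¹) := by linarith

lemma aux_sq_log_bound {t : ℝ} (ht : 0 < t) (ht1 : t ≤ 1) :
    (Real.log t) ^ 2 ≤ 64 * t ^ (-(2:ℝ)⁻¹) := by
  have h1 : Real.log t ≤ 0 := Real.log_nonpos ht.le ht1
  have h2 := Real.log_le_rpow_div (x := t⁻¹) (ε := 8⁻¹) (by positivity) (by norm_num)
  rw [Real.log_inv, Real.inv_rpow ht.le, ← Real.rpow_neg ht.le] at h2
  have h3 : (Real.log t) ^ 2 ≤ (t ^ (-(8:ℝ)⁻¹) / 8⁻¹) ^ 2 := by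
    rw [← sq_abs, abs_of_nonpos h1]
    have hpos : (0:ℝ) ≤ -Real.log t := by linarith
    exact pow_le_pow_left₀ hpos (by linarith) 2
  have h4 : (t ^ (-(8:ℝ)⁻¹)) ^ 2 = t ^ (-(4:ℝ)⁻¹) := by
    rw [← Real.rpow_natCast (t ^ (-(8:ℝ)⁻¹)) 2, ← Real.rpow_mul ht.le]
    norm_num
  have h4' : (t ^ (-(8:ℝ)⁻¹) / 8⁻¹) ^ 2 = 64 * (t ^ (-(8:ℝ)⁻¹)) ^ 2 := by ring
  have h5 : t ^ (-(4:ℝ)⁻¹) ≤ t ^ (-(2:ℝ)⁻¹) :=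
    Real.rpow_le_rpow_of_exponent_ge ht ht1 (by norm_num)
  nlinarith [Real.rpow_nonneg ht.le (-(2:ℝ)⁻¹), Real.rpow_nonneg ht.le (-(4:ℝ)⁻¹)]

lemma aux_cmp_integrable :
    IntervalIntegrable (fun x : ℝ => (1 - x) ^ (-(2:ℝ)⁻¹)) volume 0 1 := by
  have h : IntervalIntegrable (fun x : ℝ => x ^ (-(2:ℝ)⁻¹)) volume 0 1 :=
    intervalIntegrable_rpow' (by norm_num)
  simpa using (h.comp_sub_left 1).symm

lemma aux_int1 (k : ℕ) :
    IntervalIntegrable (fun x : ℝ => x ^ k * Real.log (1 - x)) volume 0 1 := by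
  apply (aux_cmp_integrable.const_mul 4).mono_fun
  · exact ((measurable_id.pow_const k).mul
      ((Real.measurable_log.comp (measurable_const.sub measurable_id)))).aestronglyMeasurable
  · rw [Filter.EventuallyLE, ae_restrict_iff' measurableSet_uIoc]
    filter_upwards with x hx
    rw [Set.uIoc_of_le (by norm_num : (0:ℝ) ≤ 1)] at hx
    obtain ⟨hx0, hx1⟩ := hx
    rcases eq_or_lt_of_le hx1 with h1 | h1
    · simp [← h1, Real.log_zero, Real.zero_rpow (by norm_num : -(2:ℝ)⁻¹ ≠ 0)]
    · have ht : 0 < 1 - x := by linarith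
      have ht1 : 1 - x ≤ 1 := by linarith
      have hb := aux_log_bound ht ht1
      have hx' : |x ^ k| ≤ 1 := by
        rw [abs_pow]; exact pow_le_one₀ (abs_nonneg x) (by rw [abs_of_pos hx0]; linarith)
      have hr : (0:ℝ) ≤ (1-x) ^ (-(2:ℝ)⁻¹) := Real.rpow_nonneg ht.le _
      simp only [norm_mul, Real.norm_eq_abs]
      calc |x ^ k| * |Real.log (1 - x)| ≤ 1 * (4 * (1-x) ^ (-(2:ℝ)⁻¹)) := by
            apply mul_le_mul hx' hb (abs_nonneg _) zero_le_one
        _ ≤ |(4:ℝ)| * |(1-x) ^ (-(2:ℝ)⁻¹)| := by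
            rw [abs_of_nonneg hr, one_mul]; norm_num

lemma aux_int2 (k : ℕ) :
    IntervalIntegrable (fun x : ℝ => x ^ k * Real.log (1 - x) ^ 2) volume 0 1 := by
  apply (aux_cmp_integrable.const_mul 64).mono_fun
  · exact ((measurable_id.pow_const k).mul
      ((Real.measurable_log.comp (measurable_const.sub measurable_id)).pow_const 2)).aestronglyMeasurable
  · rw [Filter.EventuallyLE, ae_restrict_iff' measurableSet_uIoc]
    filter_upwards with x hx
    rw [Set.uIoc_of_le (by norm_num : (0:ℝ) ≤ 1)] at hx
    obtain ⟨hx0, hx1⟩ := hx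
    rcases eq_or_lt_of_le hx1 with h1 | h1
    · simp [← h1, Real.log_zero, Real.zero_rpow (by norm_num : -(2:ℝ)⁻¹ ≠ 0)]
    · have ht : 0 < 1 - x := by linarith
      have ht1 : 1 - x ≤ 1 := by linarith
      have hb := aux_sq_log_bound ht ht1
      have hx' : |x ^ k| ≤ 1 := by
        rw [abs_pow]; exact pow_le_one₀ (abs_nonneg x) (by rw [abs_of_pos hx0]; linarith)
      have hr : (0:ℝ) ≤ (1-x) ^ (-(2:ℝ)⁻¹) := Real.rpow_nonneg ht.le _
      simp only [norm_mul, Real.norm_eq_abs]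
      calc |x ^ k| * |Real.log (1 - x) ^ 2| ≤ 1 * (64 * (1-x) ^ (-(2:ℝ)⁻¹)) := by
            apply mul_le_mul hx' ?_ (abs_nonneg _) zero_le_one
            rw [abs_pow, sq_abs]; exact hb
        _ ≤ |(64:ℝ)| * |(1-x) ^ (-(2:ℝ)⁻¹)| := by
            rw [abs_of_nonneg hr, one_mul]; norm_num



lemma aux_tendsto_sub : Tendsto (fun x : ℝ => 1 - x) (𝓝[<] (1:ℝ)) (𝓝[>] (0:ℝ)) := by
  rw [tendsto_nhdsWithin_iff]
  constructor
  · have hcont : Continuous fun x : ℝ => 1 - x := by continuity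
    have h : Tendsto (fun x : ℝ => 1 - x) (𝓝 1) (𝓝 0) := by
      simpa using hcont.tendsto 1
    exact h.mono_left nhdsWithin_le_nhds
  · filter_upwards [self_mem_nhdsWithin] with x hx
    simp only [Set.mem_Iio] at hx
    simp only [Set.mem_Ioi]; linarith

lemma aux_tendsto_mul_log :
    Tendsto (fun x : ℝ => (1 - x) * Real.log (1 - x)) (𝓝[<] (1:ℝ)) (𝓝 0) := by
  have h := (tendsto_log_mul_rpow_nhdsGT_zero one_pos).comp aux_tendsto_sub
  apply h.congr
  intro x
  simp only [Function.comp_apply, Real.rpow_one]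
  ring

lemma aux_tendsto_mul_sq_log :
    Tendsto (fun x : ℝ => (1 - x) * Real.log (1 - x) ^ 2) (𝓝[<] (1:ℝ)) (𝓝 0) := by
  have h2 : (0:ℝ) < 2⁻¹ := by norm_num
  have h := ((tendsto_log_mul_rpow_nhdsGT_zero h2).mul
    (tendsto_log_mul_rpow_nhdsGT_zero h2)).comp aux_tendsto_sub
  rw [show (0:ℝ) * 0 = 0 by ring] at h
  apply h.congr'
  filter_upwards [aux_tendsto_sub.eventually self_mem_nhdsWithin] with x hx
  have hx' : (0:ℝ) < 1 - x := hx
  show (Real.log (1-x) * (1-x) ^ ((2:ℝ)⁻¹)) * (Real.log (1-x) * (1-x) ^ ((2:ℝ)⁻¹))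
      = (1-x) * Real.log (1-x) ^ 2
  have hh : (1-x) ^ ((2:ℝ)⁻¹) * (1-x) ^ ((2:ℝ)⁻¹) = 1-x := by
    rw [← Real.rpow_add hx']; norm_num
  linear_combination (Real.log (1-x))^2 * hh

lemma aux_integral_pow_mul_log (m : ℕ) :
    ∫ x in (0:ℝ)..1, x ^ m * Real.log (1 - x)
      = -(((m:ℝ)+1)⁻¹ * ∑ k ∈ range (m+1), ((k:ℝ)+1)⁻¹) := by
  have hm : ((m:ℝ)+1) ≠ 0 := by positivity
  set G : ℝ → ℝ := fun x => (x ^ (m+1) - 1) / ((m:ℝ)+1) * Real.log (1-x)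
      - ((m:ℝ)+1)⁻¹ * ∑ k ∈ range (m+1), x ^ (k+1) / ((k:ℝ)+1) with hG
  have key2 : ∀ x : ℝ, x ^ (m+1) - 1 = -((∑ k ∈ range (m+1), x ^ k) * (1-x)) := by
    intro x; linear_combination -geom_sum_mul x (m+1)
  have hderiv : ∀ x ∈ Ioo (0:ℝ) 1, HasDerivAt G (x ^ m * Real.log (1-x)) x := by
    intro x hx
    obtain ⟨hx0, hx1⟩ := hx
    have hx1' : (1:ℝ) - x ≠ 0 := by linarith
    have hlog : HasDerivAt (fun x : ℝ => Real.log (1 - x)) (-(1-x)⁻¹) x := by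
      have h1 : HasDerivAt (fun x : ℝ => 1 - x) (-1) x := (hasDerivAt_id x).const_sub 1
      have := (Real.hasDerivAt_log hx1').comp x h1
      exact this.congr_deriv (by ring)
    have h2 : HasDerivAt (fun x : ℝ => (x ^ (m+1) - 1) / ((m:ℝ)+1)) (x ^ m) x := by
      have := ((hasDerivAt_pow (m+1) x).sub_const 1).div_const ((m:ℝ)+1)
      refine this.congr_deriv ?_
      push_cast
      field_simp
    have h4 : HasDerivAt (fun x : ℝ => ∑ k ∈ range (m+1), x ^ (k+1) / ((k:ℝ)+1))
        (∑ k ∈ range (m+1), x ^ k) x := by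
      apply HasDerivAt.fun_sum
      intro k _
      have := (hasDerivAt_pow (k+1) x).div_const ((k:ℝ)+1)
      refine this.congr_deriv ?_
      push_cast
      field_simp
    have total := (h2.mul hlog).sub (h4.const_mul (((m:ℝ)+1)⁻¹))
    have key : (x ^ (m+1) - 1) / ((m:ℝ)+1) * -(1-x)⁻¹
        = ((m:ℝ)+1)⁻¹ * ∑ k ∈ range (m+1), x ^ k := by
      rw [key2 x]
      field_simp
    refine total.congr_deriv ?_
    rw [key]; ring
  have hGeq : ∀ x : ℝ, G x
      = -(((m:ℝ)+1)⁻¹ * ((∑ k ∈ range (m+1), x ^ k) * ((1-x) * Real.log (1-x))))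
      - ((m:ℝ)+1)⁻¹ * ∑ k ∈ range (m+1), x ^ (k+1) / ((k:ℝ)+1) := by
    intro x
    simp only [hG]
    rw [key2 x]
    ring
  have ha : Tendsto G (𝓝[>] (0:ℝ)) (𝓝 0) := by
    have hcont : ContinuousAt G 0 := by
      rw [hG]
      apply ContinuousAt.sub
      · exact (((continuousAt_id.pow _).sub continuousAt_const).div_const _).mul
          ((Real.continuousAt_log (by norm_num)).comp (continuousAt_const.sub continuousAt_id))
      · exact continuousAt_const.mul
          ((continuous_finset_sum _ fun k _ => (continuous_pow (k+1)).div_const _).continuousAt)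
    have h : Tendsto G (𝓝[>] (0:ℝ)) (𝓝 (G 0)) := hcont.tendsto.mono_left nhdsWithin_le_nhds
    have hG0 : G 0 = 0 := by simp [hG]
    rwa [hG0] at h
  have hb : Tendsto G (𝓝[<] (1:ℝ))
      (𝓝 (-(((m:ℝ)+1)⁻¹ * ∑ k ∈ range (m+1), ((k:ℝ)+1)⁻¹))) := by
    rw [show G = fun x => -(((m:ℝ)+1)⁻¹ * ((∑ k ∈ range (m+1), x ^ k) * ((1-x) * Real.log (1-x))))
        - ((m:ℝ)+1)⁻¹ * ∑ k ∈ range (m+1), x ^ (k+1) / ((k:ℝ)+1) from funext hGeq]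
    rw [show (-(((m:ℝ)+1)⁻¹ * ∑ k ∈ range (m+1), ((k:ℝ)+1)⁻¹))
        = (-(((m:ℝ)+1)⁻¹ * (((m:ℝ)+1) * 0)))
          - ((m:ℝ)+1)⁻¹ * ∑ k ∈ range (m+1), ((k:ℝ)+1)⁻¹ by ring]
    apply Tendsto.sub
    · apply Tendsto.neg
      apply Tendsto.const_mul
      apply Tendsto.mul ?_ aux_tendsto_mul_log
      have h := ((continuous_finset_sum (range (m+1)) fun k _ =>
        (continuous_pow k : Continuous fun x : ℝ => x ^ k)).tendsto 1).mono_left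
        (nhdsWithin_le_nhds (s := Set.Iio (1:ℝ)))
      simpa using h
    · apply Tendsto.const_mul
      have h := ((continuous_finset_sum (range (m+1)) fun k _ =>
        ((continuous_pow (k+1)).div_const ((k:ℝ)+1) :
          Continuous fun x : ℝ => x ^ (k+1) / ((k:ℝ)+1))).tendsto 1).mono_left
        (nhdsWithin_le_nhds (s := Set.Iio (1:ℝ)))
      simpa [one_div] using h
  have hres := integral_eq_sub_of_hasDerivAt_of_tendsto zero_lt_one hderiv (aux_int1 m) ha hb
  rw [hres]; ring



lemma aux_integral_sq (n : ℕ) (hn : 1 ≤ n) :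
    ∫ x in (0:ℝ)..1, x ^ (n-1) * Real.log (1-x) ^ 2
      = (2/(n:ℝ)) * ∑ k ∈ range n, (((k:ℝ)+1)⁻¹ * ∑ i ∈ range (k+1), ((i:ℝ)+1)⁻¹) := by
  have hn' : 0 < n := hn
  have hn0 : ((n:ℝ)) ≠ 0 := Nat.cast_ne_zero.mpr hn'.ne'
  set F : ℝ → ℝ := fun x => (x ^ n - 1) / (n:ℝ) * Real.log (1-x) ^ 2 with hF
  have key2 : ∀ x : ℝ, x ^ n - 1 = -((∑ k ∈ range n, x ^ k) * (1-x)) := by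
    intro x; linear_combination -geom_sum_mul x n
  set φ : ℝ → ℝ := fun x => x ^ (n-1) * Real.log (1-x) ^ 2
      + (2/(n:ℝ)) * ∑ k ∈ range n, x ^ k * Real.log (1-x) with hφ
  have hderiv : ∀ x ∈ Ioo (0:ℝ) 1, HasDerivAt F (φ x) x := by
    intro x hx
    obtain ⟨hx0, hx1⟩ := hx
    have hx1' : (1:ℝ) - x ≠ 0 := by linarith
    have hlog : HasDerivAt (fun x : ℝ => Real.log (1 - x)) (-(1-x)⁻¹) x := by
      have h1 : HasDerivAt (fun x : ℝ => 1 - x) (-1) x := (hasDerivAt_id x).const_sub 1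
      have := (Real.hasDerivAt_log hx1').comp x h1
      exact this.congr_deriv (by ring)
    have h2 : HasDerivAt (fun x : ℝ => (x ^ n - 1) / (n:ℝ)) (x ^ (n-1)) x := by
      have := ((hasDerivAt_pow n x).sub_const 1).div_const ((n:ℝ))
      refine this.congr_deriv ?_
      field_simp
    have hlogsq : HasDerivAt (fun x : ℝ => Real.log (1-x) ^ 2)
        (2 * Real.log (1-x) ^ 1 * -(1-x)⁻¹) x := by
      have := hlog.pow 2
      exact this.congr_deriv (by norm_num)
    have total := h2.mul hlogsq
    have key : (x ^ n - 1) / (n:ℝ) * (2 * Real.log (1-x) ^ 1 * -(1-x)⁻¹)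
        = (2/(n:ℝ)) * ∑ k ∈ range n, x ^ k * Real.log (1-x) := by
      rw [key2 x, ← Finset.sum_mul]
      field_simp
    refine total.congr_deriv ?_
    rw [hφ]
    simp only []
    rw [key]
  have ha : Tendsto F (𝓝[>] (0:ℝ)) (𝓝 0) := by
    have hcont : ContinuousAt F 0 := by
      rw [hF]
      exact (((continuousAt_id.pow _).sub continuousAt_const).div_const _).mul
        (((Real.continuousAt_log (by norm_num)).comp
          (continuousAt_const.sub continuousAt_id)).pow 2)
    have h : Tendsto F (𝓝[>] (0:ℝ)) (𝓝 (F 0)) := hcont.tendsto.mono_left nhdsWithin_le_nhds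
    have hF0 : F 0 = 0 := by simp [hF]
    rwa [hF0] at h
  have hb : Tendsto F (𝓝[<] (1:ℝ)) (𝓝 0) := by
    have hFeq : F = fun x => -((n:ℝ)⁻¹ * ((∑ k ∈ range n, x ^ k)
        * ((1-x) * Real.log (1-x) ^ 2))) := by
      funext x
      simp only [hF]
      rw [key2 x]
      ring
    rw [hFeq, show (0:ℝ) = -((n:ℝ)⁻¹ * (((n:ℝ)) * 0)) by ring]
    apply Tendsto.neg
    apply Tendsto.const_mul
    apply Tendsto.mul ?_ aux_tendsto_mul_sq_log
    have h := ((continuous_finset_sum (range n) fun k _ =>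
      (continuous_pow k : Continuous fun x : ℝ => x ^ k)).tendsto 1).mono_left
      (nhdsWithin_le_nhds (s := Set.Iio (1:ℝ)))
    simpa using h
  have hint2 : IntervalIntegrable (fun x : ℝ =>
      (2/(n:ℝ)) * ∑ k ∈ range n, x ^ k * Real.log (1-x)) volume 0 1 := by
    have h := (IntervalIntegrable.sum (range n)
      (fun k _ => aux_int1 k)).const_mul (2/(n:ℝ))
    simpa [Finset.sum_apply] using h
  have hint : IntervalIntegrable φ volume 0 1 := (aux_int2 (n-1)).add hint2
  have hres := integral_eq_sub_of_hasDerivAt_of_tendsto zero_lt_one hderiv hint ha hb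
  rw [sub_zero] at hres
  have hsplit : ∫ x in (0:ℝ)..1, φ x
      = (∫ x in (0:ℝ)..1, x ^ (n-1) * Real.log (1-x) ^ 2)
        + (2/(n:ℝ)) * ∑ k ∈ range n, ∫ x in (0:ℝ)..1, x ^ k * Real.log (1-x) := by
    rw [hφ]
    rw [integral_add (aux_int2 (n-1)) hint2, intervalIntegral.integral_const_mul,
      intervalIntegral.integral_finset_sum (fun k _ => aux_int1 k)]
  rw [hres] at hsplit
  have hvals : ∑ k ∈ range n, ∫ x in (0:ℝ)..1, x ^ k * Real.log (1-x)
      = -∑ k ∈ range n, (((k:ℝ)+1)⁻¹ * ∑ i ∈ range (k+1), ((i:ℝ)+1)⁻¹) := by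
    rw [← Finset.sum_neg_distrib]
    exact Finset.sum_congr rfl fun k _ => by rw [aux_integral_pow_mul_log k]
  rw [hvals] at hsplit
  linarith [hsplit]



lemma aux_sum_id (n : ℕ) :
    2 * ∑ k ∈ range n, (((k:ℝ)+1)⁻¹ * ∑ i ∈ range (k+1), ((i:ℝ)+1)⁻¹)
      = (∑ k ∈ range n, ((k:ℝ)+1)⁻¹) ^ 2 + ∑ k ∈ range n, (((k:ℝ)+1)^2)⁻¹ := by
  induction n with
  | zero => simp
  | succ n ih =>
    rw [Finset.sum_range_succ, Finset.sum_range_succ (f := fun k => ((k:ℝ)+1)⁻¹),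
      Finset.sum_range_succ (f := fun k => (((k:ℝ)+1)^2)⁻¹)]
    have hsq : ((((n:ℝ)+1))^2)⁻¹ = ((n:ℝ)+1)⁻¹ * ((n:ℝ)+1)⁻¹ := by rw [sq, mul_inv]
    rw [hsq]
    linear_combination ih

theorem stmt_2 (n : ℕ) (hn : 1 ≤ n) :
    ∫ x in (0:ℝ)..1, x ^ (n - 1) * (Real.log (1 - x)) ^ 2
      = ((∑ j ∈ Finset.Icc 1 n, (1 : ℝ) / j) ^ 2
          + ∑ j ∈ Finset.Icc 1 n, (1 : ℝ) / (j : ℝ) ^ 2) / n := by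
  rw [aux_integral_sq n hn]
  have h1 : ∑ j ∈ Finset.Icc 1 n, (1 : ℝ) / j = ∑ k ∈ range n, ((k:ℝ)+1)⁻¹ := by
    rw [← Finset.Ico_add_one_right_eq_Icc, Finset.sum_Ico_eq_sum_range]
    norm_num
    apply Finset.sum_congr rfl
    intro k _
    push_cast
    rw [add_comm 1 (k:ℝ)]
  have h2 : ∑ j ∈ Finset.Icc 1 n, (1 : ℝ) / (j:ℝ)^2 = ∑ k ∈ range n, (((k:ℝ)+1)^2)⁻¹ := by
    rw [← Finset.Ico_add_one_right_eq_Icc, Finset.sum_Ico_eq_sum_range]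
    norm_num
    apply Finset.sum_congr rfl
    intro k _
    push_cast
    rw [add_comm 1 (k:ℝ)]
  rw [h1, h2, ← aux_sum_id n]
  ring
end

section
/- For all integers n ≥ 1, ∫₀¹ x^{n-1} ln x · ln(1-x) dx = H_n/n² - (ζ(2) - ζ_n(2))/n, where ζ(2) = π²/6 and ζ_n(2) = ∑_{j=1}^n 1/j². -/
open MeasureTheory Filter Topology Finset

private lemma aux_ii (m : ℕ) :
    IntervalIntegrable (fun x : ℝ => x ^ m * Real.log x) volume 0 1 := by
  rw [intervalIntegrable_iff_integrableOn_Ioc_of_le zero_le_one]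
  have hg : IntegrableOn (fun x : ℝ => 2 * x ^ (-(1/2) : ℝ)) (Set.Ioc 0 1) := by
    have h := intervalIntegral.intervalIntegrable_rpow' (a := 0) (b := 1) (r := -(1/2))
      (by norm_num)
    rw [intervalIntegrable_iff_integrableOn_Ioc_of_le zero_le_one] at h
    exact h.const_mul 2
  refine MeasureTheory.Integrable.mono hg
    (((continuous_pow m).measurable.mul Real.measurable_log).aestronglyMeasurable) ?_
  rw [ae_restrict_iff' measurableSet_Ioc]
  refine ae_of_all _ (fun x hx => ?_)
  obtain ⟨hx0, hx1⟩ := hx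
  have hlog : Real.log x ≤ 0 := Real.log_nonpos hx0.le hx1
  have hxm : x ^ m ≤ 1 := pow_le_one₀ hx0.le hx1
  have hxmpos : (0:ℝ) ≤ x ^ m := pow_nonneg hx0.le m
  have h5 : (0:ℝ) < x ^ (-(1/2) : ℝ) := Real.rpow_pos_of_pos hx0 _
  have h2 : -Real.log x ≤ 2 * x ^ (-(1/2) : ℝ) := by
    have h3 : Real.log (x ^ (-(1/2):ℝ)) = -(1/2) * Real.log x := Real.log_rpow hx0 _
    have h4 : Real.log (x ^ (-(1/2):ℝ)) ≤ x ^ (-(1/2):ℝ) - 1 :=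
      Real.log_le_sub_one_of_pos h5
    nlinarith
  have h1 : ‖x ^ m * Real.log x‖ = x ^ m * (-Real.log x) := by
    rw [norm_mul, Real.norm_of_nonneg hxmpos, Real.norm_of_nonpos hlog]
  calc ‖x ^ m * Real.log x‖ = x ^ m * (-Real.log x) := h1
    _ ≤ 1 * (-Real.log x) := mul_le_mul_of_nonneg_right hxm (by linarith)
    _ ≤ 2 * x ^ (-(1/2):ℝ) := by linarith
    _ ≤ ‖2 * x ^ (-(1/2):ℝ)‖ := le_abs_self _

private lemma aux_int (m : ℕ) :
    ∫ x in (0:ℝ)..1, x ^ m * Real.log x = -(1 / ((m:ℝ) + 1) ^ 2) := by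
  have hm1 : ((m:ℝ) + 1) ≠ 0 := by positivity
  have hFeq : (fun x : ℝ => x ^ m * (x * Real.log x) / ((m:ℝ) + 1)
        - x ^ (m + 1) / ((m:ℝ) + 1) ^ 2)
      = fun x => x ^ (m+1) * Real.log x / ((m:ℝ)+1) - x ^ (m+1) / ((m:ℝ)+1)^2 := by
    funext y; ring
  have hcont : ContinuousOn (fun x : ℝ => x ^ m * (x * Real.log x) / ((m:ℝ) + 1)
      - x ^ (m + 1) / ((m:ℝ) + 1) ^ 2) (Set.Icc 0 1) :=
    ((((continuous_pow m).mul Real.continuous_mul_log).div_const _).sub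
      ((continuous_pow (m+1)).div_const _)).continuousOn
  have hderiv : ∀ x ∈ Set.Ioo (0:ℝ) 1, HasDerivAt (fun x : ℝ => x ^ m * (x * Real.log x) / ((m:ℝ) + 1)
      - x ^ (m + 1) / ((m:ℝ) + 1) ^ 2) (x ^ m * Real.log x) x := by
    intro x hx
    have hx0 : x ≠ 0 := ne_of_gt hx.1
    have h1 : HasDerivAt (fun y : ℝ => y ^ (m+1)) (((m:ℝ)+1) * x ^ m) x := by
      simpa using hasDerivAt_pow (m+1) x
    have h2 : HasDerivAt Real.log x⁻¹ x := Real.hasDerivAt_log hx0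
    have h5 := ((h1.mul h2).div_const ((m:ℝ)+1)).sub (h1.div_const (((m:ℝ)+1)^2))
    rw [hFeq]
    have h5' : HasDerivAt (fun x : ℝ => x ^ (m+1) * Real.log x / ((m:ℝ)+1) - x ^ (m+1) / ((m:ℝ)+1)^2)
        ((((m:ℝ)+1) * x ^ m * Real.log x + x ^ (m+1) * x⁻¹) / ((m:ℝ)+1)
          - ((m:ℝ)+1) * x ^ m / ((m:ℝ)+1)^2) x := h5
    convert h5' using 1
    field_simp
    ring
  have hval := intervalIntegral.integral_eq_sub_of_hasDerivAt_of_le zero_le_one hcont hderiv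
    (aux_ii m)
  rw [hval]
  norm_num

private lemma icc_range (n : ℕ) (f : ℕ → ℝ) :
    ∑ j ∈ Finset.Icc 1 n, f j = ∑ i ∈ Finset.range n, f (i + 1) := by
  rw [← Finset.Ico_add_one_right_eq_Icc, Finset.sum_Ico_eq_sum_range]
  exact Finset.sum_congr rfl fun i _ => by rw [Nat.add_comm]

private lemma summable_one_div_sq : Summable (fun k : ℕ => 1 / ((k:ℝ) + 1) ^ 2) := by
  have h : Summable (fun k : ℕ => 1 / ((k:ℝ)) ^ 2) := Real.summable_one_div_nat_pow.2 one_lt_two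
  have := (summable_nat_add_iff 1).2 h
  refine this.congr fun k => ?_
  push_cast
  ring

private lemma series_eval (n : ℕ) (hn : 1 ≤ n) :
    HasSum (fun k : ℕ => 1 / (((k:ℝ) + 1) * ((n:ℝ) + k + 1) ^ 2))
      ((∑ j ∈ Finset.Icc 1 n, (1 : ℝ) / j) / (n : ℝ) ^ 2
        - (Real.pi ^ 2 / 6 - ∑ j ∈ Finset.Icc 1 n, (1 : ℝ) / (j : ℝ) ^ 2) / n) := by
  have hn0 : (0:ℝ) < n := by exact_mod_cast hn
  -- the series b
  have hb : HasSum (fun k : ℕ => 1 / ((n:ℝ) + k + 1) ^ 2)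
      (Real.pi ^ 2 / 6 - ∑ j ∈ Finset.Icc 1 n, (1 : ℝ) / (j : ℝ) ^ 2) := by
    have hS : ∑ i ∈ Finset.range (n+1), 1 / ((i:ℝ))^2
        = ∑ j ∈ Finset.Icc 1 n, (1 : ℝ) / (j : ℝ) ^ 2 := by
      rw [Finset.sum_range_succ' (fun i => 1 / ((i:ℝ))^2) n,
        icc_range n (fun j => 1 / ((j:ℝ))^2)]
      push_cast
      norm_num
    have hb0 : HasSum (fun k : ℕ => 1 / ((↑(k + (n+1)) : ℝ))^2)
        ((Real.pi ^ 2 / 6 - ∑ j ∈ Finset.Icc 1 n, (1 : ℝ) / (j : ℝ) ^ 2)) := by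
      refine (hasSum_nat_add_iff (f := fun i : ℕ => 1 / ((i:ℝ))^2) (n+1)).mpr ?_
      rw [hS, sub_add_cancel]
      exact hasSum_zeta_two
    refine hb0.congr_fun fun k => ?_
    push_cast
    ring_nf
  -- the series a
  set f : ℕ → ℝ := fun i => 1 / ((i:ℝ) + 1) with hf
  set a : ℕ → ℝ := fun k => f k - f (n + k) with ha'
  have hsa : Summable a := by
    refine Summable.of_nonneg_of_le (fun k => ?_) (fun k => ?_)
      (summable_one_div_sq.mul_left (n:ℝ))
    · have h1 : (0:ℝ) < (k:ℝ) + 1 := by positivity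
      have h2 : ((k:ℝ) + 1) ≤ ((n:ℝ) + k + 1) := by linarith
      have h3 := one_div_le_one_div_of_le h1 h2
      have h4 : (0:ℝ) ≤ 1/((k:ℝ)+1) - 1/((n:ℝ)+k+1) := by linarith
      refine le_trans h4 (le_of_eq ?_)
      simp only [ha', hf]
      push_cast
      ring
    · have h1 : (0:ℝ) < (k:ℝ) + 1 := by positivity
      have h2 : (0:ℝ) < (n:ℝ) + (k:ℝ) + 1 := by positivity
      have heq : a k = (n:ℝ) / (((k:ℝ) + 1) * ((n:ℝ) + k + 1)) := by
        simp only [ha', hf]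
        push_cast
        field_simp
        ring
      rw [heq]
      have hle : ((k:ℝ)+1)^2 ≤ ((k:ℝ) + 1) * ((n:ℝ) + k + 1) := by nlinarith
      calc (n:ℝ) / (((k:ℝ) + 1) * ((n:ℝ) + k + 1)) ≤ (n:ℝ) / ((k:ℝ)+1)^2 :=
            div_le_div_of_nonneg_left hn0.le (by positivity) hle
        _ = (n:ℝ) * (1 / ((k:ℝ)+1)^2) := by ring
  have hA : ∀ K : ℕ, ∑ k ∈ Finset.range K, a k
      = ∑ i ∈ Finset.range n, f i - ∑ i ∈ Finset.range n, f (K + i) := by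
    intro K
    have e1 : ∑ i ∈ Finset.range (K + n), f i
        = ∑ i ∈ Finset.range n, f i + ∑ i ∈ Finset.range K, f (n + i) := by
      rw [Nat.add_comm K n]; exact Finset.sum_range_add f n K
    have e2 : ∑ i ∈ Finset.range (K + n), f i
        = ∑ i ∈ Finset.range K, f i + ∑ i ∈ Finset.range n, f (K + i) :=
      Finset.sum_range_add f K n
    have e3 : ∑ k ∈ Finset.range K, a k
        = ∑ k ∈ Finset.range K, f k - ∑ k ∈ Finset.range K, f (n + k) :=
      Finset.sum_sub_distrib _ _
    rw [e3]; linarith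
  have hzero : Tendsto (fun K : ℕ => ∑ i ∈ Finset.range n, f (K + i)) atTop (𝓝 0) := by
    have : Tendsto (fun K : ℕ => ∑ i ∈ Finset.range n, f (K + i)) atTop
        (𝓝 (∑ _i ∈ Finset.range n, (0:ℝ))) := by
      refine tendsto_finset_sum _ (fun i _ => ?_)
      have h1 : Tendsto (fun K : ℕ => (K:ℝ) + ((i:ℝ) + 1)) atTop atTop :=
        tendsto_atTop_add_const_right atTop _ tendsto_natCast_atTop_atTop
      have h2 := h1.inv_tendsto_atTop
      refine h2.congr fun K => ?_
      simp only [Pi.inv_apply, hf, one_div]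
      push_cast
      ring
    simpa using this
  have hlim : Tendsto (fun K : ℕ => ∑ k ∈ Finset.range K, a k) atTop
      (𝓝 (∑ i ∈ Finset.range n, f i)) := by
    have := (tendsto_const_nhds (x := ∑ i ∈ Finset.range n, f i) (f := atTop)).sub hzero
    rw [sub_zero] at this
    exact this.congr fun K => (hA K).symm
  have ha : HasSum a (∑ j ∈ Finset.Icc 1 n, (1 : ℝ) / j) := by
    have h1 : ∑' k, a k = ∑ i ∈ Finset.range n, f i :=
      tendsto_nhds_unique hsa.hasSum.tendsto_sum_nat hlim
    have h2 : ∑ j ∈ Finset.Icc 1 n, (1 : ℝ) / j = ∑ i ∈ Finset.range n, f i := by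
      rw [icc_range n (fun j => (1:ℝ)/j)]
      refine Finset.sum_congr rfl fun i _ => ?_
      simp only [hf]; push_cast; ring
    rw [h2, ← h1]
    exact hsa.hasSum
  -- combine
  have hc := (ha.mul_left (1/(n:ℝ)^2)).sub (hb.mul_left (1/(n:ℝ)))
  have hfun : ∀ k : ℕ, 1 / (((k:ℝ) + 1) * ((n:ℝ) + k + 1) ^ 2)
      = 1/(n:ℝ)^2 * a k - 1/(n:ℝ) * (1 / ((n:ℝ) + k + 1) ^ 2) := by
    intro k
    have h1 : ((k:ℝ) + 1) ≠ 0 := by positivity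
    have h2 : ((n:ℝ) + k + 1) ≠ 0 := by positivity
    simp only [ha', hf]
    push_cast
    field_simp
    ring
  have hval : 1/(n:ℝ)^2 * (∑ j ∈ Finset.Icc 1 n, (1 : ℝ) / j)
      - 1/(n:ℝ) * (Real.pi ^ 2 / 6 - ∑ j ∈ Finset.Icc 1 n, (1 : ℝ) / (j : ℝ) ^ 2)
      = (∑ j ∈ Finset.Icc 1 n, (1 : ℝ) / j) / (n : ℝ) ^ 2
        - (Real.pi ^ 2 / 6 - ∑ j ∈ Finset.Icc 1 n, (1 : ℝ) / (j : ℝ) ^ 2) / n := by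
    ring
  rw [← hval]
  exact hc.congr_fun hfun

theorem stmt_3 (n : ℕ) (hn : 1 ≤ n) :
    ∫ x in (0:ℝ)..1, x ^ (n - 1) * Real.log x * Real.log (1 - x)
      = (∑ j ∈ Finset.Icc 1 n, (1 : ℝ) / j) / (n : ℝ) ^ 2
        - (Real.pi ^ 2 / 6 - ∑ j ∈ Finset.Icc 1 n, (1 : ℝ) / (j : ℝ) ^ 2) / n := by
  set g : ℕ → ℝ → ℝ := fun k x => -(1/((k:ℝ)+1)) * (x ^ (n + k) * Real.log x) with hg
  set c : ℕ → ℝ := fun k => 1 / (((k:ℝ) + 1) * ((n:ℝ) + k + 1) ^ 2) with hc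
  -- pointwise series expansion
  have hEq : Set.EqOn (fun x => x ^ (n - 1) * Real.log x * Real.log (1 - x))
      (fun x => ∑' k, g k x) (Set.Ioo 0 1) := by
    intro x hx
    obtain ⟨hx0, hx1⟩ := hx
    have hxabs : |x| < 1 := by rw [abs_of_pos hx0]; exact hx1
    have H := ((Real.hasSum_pow_div_log_of_abs_lt_one hxabs).mul_left
      (x ^ (n - 1) * Real.log x)).neg
    have hfun : ∀ k : ℕ, g k x = -(x ^ (n - 1) * Real.log x * (x ^ (k + 1) / ((k:ℝ) + 1))) := by
      intro k
      have hpow : x ^ (n + k) = x ^ (n - 1) * x ^ (k + 1) := by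
        rw [← pow_add]; congr 1; omega
      simp only [hg, hpow]; ring
    have H2 : HasSum (fun k => g k x) (x ^ (n - 1) * Real.log x * Real.log (1 - x)) := by
      have hv : -(x ^ (n - 1) * Real.log x * -Real.log (1 - x))
          = x ^ (n - 1) * Real.log x * Real.log (1 - x) := by ring
      rw [← hv]
      exact H.congr_fun hfun
    exact (H2.tsum_eq).symm
  -- integrability of each term
  have hInt : ∀ k : ℕ, Integrable (g k) (volume.restrict (Set.Ioo (0:ℝ) 1)) := by
    intro k
    have h0 : IntegrableOn (fun x : ℝ => x ^ (n + k) * Real.log x) (Set.Ioo 0 1) :=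
      (((intervalIntegrable_iff_integrableOn_Ioc_of_le zero_le_one).1
        (aux_ii (n + k))).mono_set Set.Ioo_subset_Ioc_self)
    exact h0.const_mul _
  -- value of each integral
  have hval : ∀ k : ℕ, ∫ x in Set.Ioo (0:ℝ) 1, g k x = c k := by
    intro k
    have h1 : ((k:ℝ) + 1) ≠ 0 := by positivity
    have h2 : ((n:ℝ) + k + 1) ≠ 0 := by positivity
    rw [← MeasureTheory.integral_Ioc_eq_integral_Ioo,
      ← intervalIntegral.integral_of_le zero_le_one]
    have : ∫ x in (0:ℝ)..1, g k x
        = -(1/((k:ℝ)+1)) * ∫ x in (0:ℝ)..1, x ^ (n + k) * Real.log x := by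
      simp only [hg]
      rw [intervalIntegral.integral_const_mul]
    rw [this, aux_int (n + k), hc]
    push_cast
    field_simp
  -- nonnegativity on the set, for the norm integrals
  have hnorm : ∀ k : ℕ, ∫ x in Set.Ioo (0:ℝ) 1, ‖g k x‖ = c k := by
    intro k
    rw [← hval k]
    refine setIntegral_congr_fun measurableSet_Ioo fun x hx => ?_
    obtain ⟨hx0, hx1⟩ := hx
    have hlog : Real.log x ≤ 0 := Real.log_nonpos hx0.le hx1.le
    have hpos : 0 ≤ g k x := by
      simp only [hg]
      have : x ^ (n + k) * Real.log x ≤ 0 :=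
        mul_nonpos_of_nonneg_of_nonpos (pow_nonneg hx0.le _) hlog
      have hk : (0:ℝ) < 1/((k:ℝ)+1) := by positivity
      nlinarith
    exact Real.norm_of_nonneg hpos
  have hcsum : Summable c := by
    refine Summable.of_nonneg_of_le (fun k => by positivity) (fun k => ?_) summable_one_div_sq
    have h1 : (0:ℝ) < ((k:ℝ)+1)^2 := by positivity
    have hn0 : (0:ℝ) ≤ n := Nat.cast_nonneg n
    have hle : ((k:ℝ)+1)^2 ≤ ((k:ℝ) + 1) * ((n:ℝ) + k + 1)^2 := by nlinarith
    exact one_div_le_one_div_of_le h1 hle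
  have hSum : Summable (fun k => ∫ x in Set.Ioo (0:ℝ) 1, ‖g k x‖) := by
    refine hcsum.congr fun k => (hnorm k).symm
  rw [intervalIntegral.integral_of_le zero_le_one, MeasureTheory.integral_Ioc_eq_integral_Ioo,
    setIntegral_congr_fun measurableSet_Ioo hEq,
    ← MeasureTheory.integral_tsum_of_summable_integral_norm hInt hSum]
  rw [tsum_congr hval]
  exact (series_eval n hn).tsum_eq
end

section
/- For all integers n ≥ 1, ∫₀¹ x^{n-1} (ln(1-x))³ dx = -(H_n³ + 3 H_n ζ_n(2) + 2 ζ_n(3))/n, where H_n = ∑_{j=1}^n 1/j, ζ_n(2) = ∑_{j=1}^n 1/j², ζ_n(3) = ∑_{j=1}^n 1/j³. -/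
open MeasureTheory Set Real Filter intervalIntegral

-- bound: for t in (0,1), (-log t)^p ≤ 2^p * p! * t^(-1/2)
lemma log_pow_bound_s4 (p : ℕ) {t : ℝ} (ht : 0 < t) (ht1 : t < 1) :
    |Real.log t| ^ p ≤ 2 ^ p * p.factorial * t ^ (-(1/2) : ℝ) := by
  have hlt : Real.log t < 0 := Real.log_neg ht ht1
  set u : ℝ := -Real.log t with hu
  have hu0 : 0 ≤ u := by simp [hu]; linarith
  have habs : |Real.log t| = u := by rw [abs_of_neg hlt]
  have h1 : (u/2) ^ p ≤ p.factorial * Real.exp (u/2) := by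
    have := Real.sum_le_exp_of_nonneg (by linarith : (0:ℝ) ≤ u/2) (p+1)
    have h2 : (u/2)^p / p.factorial ≤ Real.exp (u/2) := by
      refine le_trans ?_ this
      have : (u/2)^p / p.factorial = ∑ i ∈ Finset.range (p+1) , if i = p then (u/2)^i / i.factorial else 0 := by
        simp
      rw [this]
      apply Finset.sum_le_sum
      intro i hi
      split
      · exact le_refl _
      · positivity
    calc (u/2)^p = ((u/2)^p / p.factorial) * p.factorial := by
          field_simp
      _ ≤ Real.exp (u/2) * p.factorial := by
          apply mul_le_mul_of_nonneg_right h2 (by positivity)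
      _ = p.factorial * Real.exp (u/2) := by ring
  have hexp : Real.exp (u/2) = t ^ (-(1/2) : ℝ) := by
    have h3 : u/2 = Real.log (t ^ (-(1/2):ℝ)) := by
      rw [Real.log_rpow ht]; rw [hu]; ring
    rw [h3, Real.exp_log (Real.rpow_pos_of_pos ht _)]
  have : u ^ p = 2^p * (u/2)^p := by
    rw [← mul_pow]; ring_nf
  rw [habs, this]
  calc (2:ℝ)^p * (u/2)^p ≤ 2^p * (p.factorial * Real.exp (u/2)) := by
        apply mul_le_mul_of_nonneg_left h1 (by positivity)
    _ = 2^p * p.factorial * t ^ (-(1/2):ℝ) := by rw [hexp]; ring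

lemma integrable_xk_logp (k p : ℕ) :
    IntervalIntegrable (fun x : ℝ => x ^ k * (Real.log (1 - x)) ^ p) volume 0 1 := by
  rw [intervalIntegrable_iff_integrableOn_Ioo_of_le zero_le_one]
  have hmaj : IntegrableOn (fun x : ℝ => 2 ^ p * (p.factorial : ℝ) * (1 - x) ^ (-(1/2) : ℝ)) (Ioo 0 1) volume := by
    have h1 : IntervalIntegrable (fun x : ℝ => x ^ (-(1/2) : ℝ)) volume 0 1 :=
      intervalIntegral.intervalIntegrable_rpow' (by norm_num)
    have h2 := (h1.comp_sub_left 1)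
    norm_num at h2
    have h3 : IntervalIntegrable (fun x : ℝ => (1 - x) ^ (-(1/2) : ℝ)) volume 0 1 := h2.symm
    have := (h3.const_mul (2 ^ p * (p.factorial : ℝ)))
    rw [intervalIntegrable_iff_integrableOn_Ioo_of_le zero_le_one] at this
    exact this
  apply Integrable.mono hmaj
  · apply Measurable.aestronglyMeasurable
    exact (measurable_id.pow_const k).mul ((Real.measurable_log.comp (measurable_const.sub measurable_id)).pow_const p)
  · filter_upwards [ae_restrict_mem measurableSet_Ioo] with x hx
    obtain ⟨hx0, hx1⟩ := hx
    have h1x0 : 0 < 1 - x := by linarith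
    have h1x1 : 1 - x < 1 := by linarith
    rw [Real.norm_eq_abs, Real.norm_eq_abs, abs_mul, abs_pow, abs_pow]
    have hb := log_pow_bound_s4 p h1x0 h1x1
    calc |x| ^ k * |Real.log (1-x)| ^ p ≤ 1 * |Real.log (1-x)| ^ p := by
          apply mul_le_mul_of_nonneg_right _ (by positivity)
          apply pow_le_one₀ (abs_nonneg x)
          rw [abs_of_pos hx0]; linarith
      _ = |Real.log (1-x)| ^ p := one_mul _
      _ ≤ 2 ^ p * p.factorial * (1-x) ^ (-(1/2):ℝ) := hb
      _ ≤ |2 ^ p * (p.factorial:ℝ) * (1-x) ^ (-(1/2):ℝ)| := le_abs_self _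

lemma tendsto_mul_log_pow (p : ℕ) (hp : 1 ≤ p) :
    Tendsto (fun t : ℝ => t * (Real.log t) ^ p) (nhdsWithin 0 (Ioi 0)) (nhds 0) := by
  have h0 : Tendsto (fun t : ℝ => Real.log t * t ^ ((p:ℝ)⁻¹)) (nhdsWithin 0 (Ioi 0)) (nhds 0) :=
    tendsto_log_mul_rpow_nhdsGT_zero (by positivity)
  have h1 : Tendsto (fun t : ℝ => (Real.log t * t ^ ((p:ℝ)⁻¹)) ^ p) (nhdsWithin 0 (Ioi 0)) (nhds 0) := by
    have := h0.pow p
    simpa [zero_pow (by omega : p ≠ 0)] using this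
  apply h1.congr'
  filter_upwards [self_mem_nhdsWithin] with t (ht : 0 < t)
  rw [mul_pow, ← Real.rpow_natCast (t ^ ((p:ℝ)⁻¹)) p, ← Real.rpow_mul ht.le,
    inv_mul_cancel₀ (by positivity : (p:ℝ) ≠ 0), Real.rpow_one]
  ring

lemma tendsto_boundary (n p : ℕ) (hp : 1 ≤ p) :
    Tendsto (fun x : ℝ => (x ^ n - 1) * (Real.log (1 - x)) ^ p) (nhdsWithin 1 (Iio 1)) (nhds 0) := by
  have hmap : Tendsto (fun x : ℝ => 1 - x) (nhdsWithin 1 (Iio 1)) (nhdsWithin 0 (Ioi 0)) := by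
    apply tendsto_nhdsWithin_of_tendsto_nhds_of_eventually_within
    · have hc : Continuous (fun x : ℝ => 1 - x) := by continuity
      have h := hc.tendsto (1:ℝ)
      norm_num at h
      exact h.mono_left nhdsWithin_le_nhds
    · filter_upwards [self_mem_nhdsWithin] with x (hx : x < 1)
      simp [Set.mem_Ioi]; linarith
  have h1 : Tendsto (fun x : ℝ => (1 - x) * (Real.log (1 - x)) ^ p) (nhdsWithin 1 (Iio 1)) (nhds 0) :=
    (tendsto_mul_log_pow p hp).comp hmap
  have h2 : Tendsto (fun x : ℝ => -(∑ k ∈ Finset.range n, x ^ k)) (nhdsWithin 1 (Iio 1)) (nhds (-(n:ℝ))) := by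
    have hc : Continuous (fun x : ℝ => -(∑ k ∈ Finset.range n, x ^ k)) := by
      continuity
    have := hc.tendsto (1:ℝ)
    simp only [one_pow, Finset.sum_const, Finset.card_range, nsmul_eq_mul, mul_one] at this
    exact this.mono_left nhdsWithin_le_nhds
  have h3 := h2.mul h1
  simp only [mul_zero] at h3
  apply h3.congr
  intro x
  have : x ^ n - 1 = -((1 - x) * ∑ k ∈ Finset.range n, x ^ k) := by
    have := geom_sum_mul (x:ℝ) n
    nlinarith [geom_sum_mul (x:ℝ) n]
  rw [this]; ring

set_option maxHeartbeats 1000000 in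
lemma recurrence (n p : ℕ) (hn : 1 ≤ n) (hp : 1 ≤ p) :
    (n:ℝ) * ∫ x in (0:ℝ)..1, x ^ (n-1) * (Real.log (1-x)) ^ p
      = -(p:ℝ) * ∑ k ∈ Finset.range n, ∫ x in (0:ℝ)..1, x ^ k * (Real.log (1-x)) ^ (p-1) := by
  set G : ℝ → ℝ := fun x => (x ^ n - 1) * (Real.log (1 - x)) ^ p with hG
  set F : ℝ → ℝ := fun x => (n:ℝ) * (x ^ (n-1) * (Real.log (1-x)) ^ p)
      + (p:ℝ) * ∑ k ∈ Finset.range n, x ^ k * (Real.log (1-x)) ^ (p-1) with hF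
  have hderiv : ∀ x ∈ Ioo (0:ℝ) 1, HasDerivAt G (F x) x := by
    intro x hx
    have hx1 : (1:ℝ) - x ≠ 0 := by have := hx.2; intro h; simp only [mem_Ioo] at hx; linarith
    have hd1 : HasDerivAt (fun x : ℝ => x ^ n - 1) ((n:ℝ) * x ^ (n-1)) x :=
      (hasDerivAt_pow n x).sub_const 1
    have hin : HasDerivAt (fun x : ℝ => 1 - x) (-1) x := by
      simpa using (hasDerivAt_id x).const_sub 1
    have hlog : HasDerivAt (fun x : ℝ => Real.log (1 - x)) ((1-x)⁻¹ * (-1)) x :=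
      (Real.hasDerivAt_log hx1).comp x hin
    have hLp : HasDerivAt (fun x : ℝ => (Real.log (1 - x)) ^ p)
        ((p:ℝ) * (Real.log (1-x)) ^ (p-1) * ((1-x)⁻¹ * (-1))) x := hlog.pow p
    have hmul := hd1.mul hLp
    refine hmul.congr_deriv ?_
    have key : (x ^ n - 1) * ((1-x)⁻¹ * (-1)) = ∑ k ∈ Finset.range n, x ^ k := by
      have hg := geom_sum_mul x n
      rw [← hg, mul_assoc]
      have h2 : (x - 1) * ((1-x)⁻¹ * (-1)) = 1 := by
        field_simp; ring
      rw [h2, mul_one]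
    rw [hF]
    simp only
    rw [← Finset.sum_mul, ← key]
    ring
  have hsum : IntervalIntegrable (fun x : ℝ => ∑ k ∈ Finset.range n, x ^ k * (Real.log (1-x)) ^ (p-1)) volume 0 1 := by
    have h := IntervalIntegrable.sum (μ := volume) (a := 0) (b := 1) (Finset.range n)
      (f := fun k => fun x : ℝ => x ^ k * (Real.log (1-x)) ^ (p-1))
      (fun k _ => integrable_xk_logp k (p-1))
    simpa [Finset.sum_fn] using h
  have hint : IntervalIntegrable F volume 0 1 := by
    rw [hF]
    exact ((integrable_xk_logp (n-1) p).const_mul _).add (hsum.const_mul _)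
  have h0 : Tendsto G (nhdsWithin 0 (Ioi 0)) (nhds 0) := by
    have hc : ContinuousAt G 0 := by
      have hlc : ContinuousAt (fun x : ℝ => Real.log (1 - x)) 0 := by
        have hl1 : ContinuousAt Real.log ((fun x : ℝ => 1 - x) 0) := by
          simp only [sub_zero]; exact Real.continuousAt_log one_ne_zero
        exact hl1.comp ((continuous_const.sub continuous_id).continuousAt)
      exact (((continuous_pow n).continuousAt).sub continuousAt_const).mul (hlc.pow p)
    have hG0 : G 0 = 0 := by
      simp [hG, Real.log_one, zero_pow (by omega : p ≠ 0), zero_pow (by omega : n ≠ 0)]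
    have := hc.tendsto
    rw [hG0] at this
    exact this.mono_left nhdsWithin_le_nhds
  have h1 : Tendsto G (nhdsWithin 1 (Iio 1)) (nhds 0) := tendsto_boundary n p hp
  have hFTC := intervalIntegral.integral_eq_sub_of_hasDerivAt_of_tendsto zero_lt_one hderiv hint h0 h1
  rw [sub_zero] at hFTC
  have hsplit : ∫ x in (0:ℝ)..1, F x
      = (n:ℝ) * (∫ x in (0:ℝ)..1, x ^ (n-1) * (Real.log (1-x)) ^ p)
        + (p:ℝ) * ∑ k ∈ Finset.range n, ∫ x in (0:ℝ)..1, x ^ k * (Real.log (1-x)) ^ (p-1) := by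
    rw [hF]
    rw [intervalIntegral.integral_add ((integrable_xk_logp (n-1) p).const_mul _)
      (hsum.const_mul _)]
    rw [intervalIntegral.integral_const_mul, intervalIntegral.integral_const_mul,
      intervalIntegral.integral_finset_sum (fun k _ => integrable_xk_logp k (p-1))]
  rw [hsplit] at hFTC
  linarith

noncomputable def Hh (m : ℕ) : ℝ := ∑ k ∈ Finset.range m, (1:ℝ)/((k:ℝ)+1)
noncomputable def Zz2 (m : ℕ) : ℝ := ∑ k ∈ Finset.range m, (1:ℝ)/((k:ℝ)+1)^2
noncomputable def Zz3 (m : ℕ) : ℝ := ∑ k ∈ Finset.range m, (1:ℝ)/((k:ℝ)+1)^3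

lemma I1 (m : ℕ) (hm : 1 ≤ m) :
    ∫ x in (0:ℝ)..1, x ^ (m-1) * (Real.log (1-x)) ^ 1 = -(Hh m)/m := by
  have hr := recurrence m 1 hm le_rfl
  have hm0 : (m:ℝ) ≠ 0 := by positivity
  have hsum : ∑ k ∈ Finset.range m, ∫ x in (0:ℝ)..1, x ^ k * (Real.log (1-x)) ^ (1-1) = Hh m := by
    rw [Hh]
    apply Finset.sum_congr rfl
    intro k _
    norm_num [integral_pow]
  rw [hsum] at hr
  rw [eq_div_iff hm0]
  linear_combination hr

lemma A2 (m : ℕ) :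
    2 * ∑ k ∈ Finset.range m, Hh (k+1) / ((k:ℝ)+1) = Hh m ^ 2 + Zz2 m := by
  induction m with
  | zero => simp [Hh, Zz2]
  | succ m ih =>
    have hc : ((m:ℝ)+1) ≠ 0 := by positivity
    have hH : Hh (m+1) = Hh m + 1/((m:ℝ)+1) := by rw [Hh, Hh, Finset.sum_range_succ]
    have hZ2 : Zz2 (m+1) = Zz2 m + 1/((m:ℝ)+1)^2 := by rw [Zz2, Zz2, Finset.sum_range_succ]
    have e2 : (1:ℝ)/((m:ℝ)+1)^2 = (1/((m:ℝ)+1))*(1/((m:ℝ)+1)) := by field_simp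
    rw [Finset.sum_range_succ, hH, hZ2, e2]
    linear_combination ih

lemma I2 (m : ℕ) (hm : 1 ≤ m) :
    ∫ x in (0:ℝ)..1, x ^ (m-1) * (Real.log (1-x)) ^ 2 = (Hh m ^ 2 + Zz2 m)/m := by
  have hr := recurrence m 2 hm (by norm_num)
  have hm0 : (m:ℝ) ≠ 0 := by positivity
  have hsum : ∑ k ∈ Finset.range m, ∫ x in (0:ℝ)..1, x ^ k * (Real.log (1-x)) ^ (2-1)
      = -∑ k ∈ Finset.range m, Hh (k+1) / ((k:ℝ)+1) := by
    rw [← Finset.sum_neg_distrib]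
    apply Finset.sum_congr rfl
    intro k _
    have this := I1 (k+1) (by omega)
    simp only [Nat.add_sub_cancel] at this
    rw [show (2:ℕ)-1 = 1 by norm_num, this]
    push_cast
    ring
  rw [hsum] at hr
  have hA := A2 m
  rw [eq_div_iff hm0]
  linear_combination hr + hA

lemma A3 (m : ℕ) :
    3 * ∑ k ∈ Finset.range m, (Hh (k+1) ^ 2 + Zz2 (k+1)) / ((k:ℝ)+1)
      = Hh m ^ 3 + 3 * Hh m * Zz2 m + 2 * Zz3 m := by
  induction m with
  | zero => simp [Hh, Zz2, Zz3]
  | succ m ih =>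
    rw [Finset.sum_range_succ]
    have hc : ((m:ℝ)+1) ≠ 0 := by positivity
    have hH : Hh (m+1) = Hh m + 1/((m:ℝ)+1) := by rw [Hh, Hh, Finset.sum_range_succ]
    have hZ2 : Zz2 (m+1) = Zz2 m + 1/((m:ℝ)+1)^2 := by rw [Zz2, Zz2, Finset.sum_range_succ]
    have hZ3 : Zz3 (m+1) = Zz3 m + 1/((m:ℝ)+1)^3 := by rw [Zz3, Zz3, Finset.sum_range_succ]
    have e2 : (1:ℝ)/((m:ℝ)+1)^2 = (1/((m:ℝ)+1))*(1/((m:ℝ)+1)) := by field_simp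
    have e3 : (1:ℝ)/((m:ℝ)+1)^3 = (1/((m:ℝ)+1))*(1/((m:ℝ)+1))*(1/((m:ℝ)+1)) := by
      field_simp
    rw [hH, hZ2, hZ3, e2, e3]
    linear_combination ih

lemma I3 (m : ℕ) (hm : 1 ≤ m) :
    ∫ x in (0:ℝ)..1, x ^ (m-1) * (Real.log (1-x)) ^ 3
      = -(Hh m ^ 3 + 3 * Hh m * Zz2 m + 2 * Zz3 m)/m := by
  have hr := recurrence m 3 hm (by norm_num)
  have hm0 : (m:ℝ) ≠ 0 := by positivity
  have hsum : ∑ k ∈ Finset.range m, ∫ x in (0:ℝ)..1, x ^ k * (Real.log (1-x)) ^ (3-1)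
      = ∑ k ∈ Finset.range m, (Hh (k+1) ^ 2 + Zz2 (k+1)) / ((k:ℝ)+1) := by
    apply Finset.sum_congr rfl
    intro k _
    have this := I2 (k+1) (by omega)
    simp only [Nat.add_sub_cancel] at this
    rw [show (3:ℕ)-1 = 2 by norm_num, this]
    push_cast
    ring
  rw [hsum] at hr
  have hA := A3 m
  rw [eq_div_iff hm0]
  linear_combination hr - hA



theorem stmt_4 (n : ℕ) (hn : 1 ≤ n) :
    ∫ x in (0:ℝ)..1, x ^ (n - 1) * (Real.log (1 - x)) ^ 3
      = -((∑ j ∈ Finset.Icc 1 n, (1 : ℝ) / j) ^ 3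
          + 3 * (∑ j ∈ Finset.Icc 1 n, (1 : ℝ) / j)
              * (∑ j ∈ Finset.Icc 1 n, (1 : ℝ) / (j : ℝ) ^ 2)
          + 2 * ∑ j ∈ Finset.Icc 1 n, (1 : ℝ) / (j : ℝ) ^ 3) / n := by
  have h1 : ∑ j ∈ Finset.Icc 1 n, (1:ℝ)/j = Hh n := by
    rw [Hh, ← Finset.Ico_add_one_right_eq_Icc, Finset.sum_Ico_eq_sum_range]
    norm_num
    apply Finset.sum_congr rfl
    intro k _
    rw [add_comm]
  have h2 : ∑ j ∈ Finset.Icc 1 n, (1:ℝ)/(j:ℝ)^2 = Zz2 n := by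
    rw [Zz2, ← Finset.Ico_add_one_right_eq_Icc, Finset.sum_Ico_eq_sum_range]
    norm_num
    apply Finset.sum_congr rfl
    intro k _
    rw [add_comm]
  have h3 : ∑ j ∈ Finset.Icc 1 n, (1:ℝ)/(j:ℝ)^3 = Zz3 n := by
    rw [Zz3, ← Finset.Ico_add_one_right_eq_Icc, Finset.sum_Ico_eq_sum_range]
    norm_num
    apply Finset.sum_congr rfl
    intro k _
    rw [add_comm]
  rw [h1, h2, h3, I3 n hn]
end

section
/- For all integers n ≥ 1 and m ≥ 1, ∫₀¹ x^n (ln x)^m / (1-x) dx = (-1)^m · m! · (ζ(m+1) - ζ_n(m+1)), where ζ(m+1) is the Riemann zeta value and ζ_n(m+1) = ∑_{j=1}^n 1/j^{m+1}. -/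
open Real MeasureTheory Filter Set Topology

lemma lim0 (k m : ℕ) (hk : 1 ≤ k) :
    Tendsto (fun x : ℝ => x ^ k * Real.log x ^ m) (𝓝[>] (0:ℝ)) (𝓝 0) := by
  rcases Nat.eq_zero_or_pos m with hm | hm
  · subst hm
    have : Tendsto (fun x : ℝ => x ^ k) (𝓝 (0:ℝ)) (𝓝 ((0:ℝ) ^ k)) :=
      (continuous_pow k).tendsto 0
    rw [zero_pow (by omega : k ≠ 0)] at this
    simpa using this.mono_left nhdsWithin_le_nhds
  · have hr : (0:ℝ) < (k:ℝ) / m := by positivity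
    have h := (tendsto_log_mul_rpow_nhdsGT_zero hr).pow m
    rw [zero_pow (by omega : m ≠ 0)] at h
    refine h.congr' ?_
    filter_upwards [self_mem_nhdsWithin] with x (hx : 0 < x)
    rw [mul_pow, ← Real.rpow_natCast (x ^ ((k:ℝ)/m)) m, ← Real.rpow_mul hx.le]
    have hm0 : (m:ℝ) ≠ 0 := by positivity
    have : (k:ℝ)/m * m = (k:ℕ) := by field_simp
    rw [this, Real.rpow_natCast]
    ring

lemma contOn (k m : ℕ) (hk : 1 ≤ k) :
    ContinuousOn (fun x : ℝ => x ^ k * Real.log x ^ m) (Icc (0:ℝ) 1) := by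
  intro x hx
  rcases eq_or_ne x 0 with rfl | hx0
  · rw [← continuousWithinAt_diff_self]
    have h0 : (0:ℝ) ^ k * Real.log 0 ^ m = 0 := by
      rw [zero_pow (by omega : k ≠ 0), zero_mul]
    have : ContinuousWithinAt (fun x : ℝ => x ^ k * Real.log x ^ m) (Ioi 0) 0 := by
      rw [ContinuousWithinAt, h0]
      exact lim0 k m hk
    exact this.mono (fun y hy => lt_of_le_of_ne hy.1.1 (Ne.symm (by simpa using hy.2)))
  · exact (((continuous_pow k).continuousAt).mul
      (((Real.continuousAt_log hx0)).pow m)).continuousWithinAt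

lemma intble (k m : ℕ) (hk : 1 ≤ k) :
    IntervalIntegrable (fun x : ℝ => x ^ k * Real.log x ^ m) volume 0 1 := by
  apply ContinuousOn.intervalIntegrable
  rw [uIcc_of_le zero_le_one]
  exact contOn k m hk

lemma intA : ∀ (m : ℕ), ∀ (k : ℕ), 1 ≤ k → (∫ x in (0:ℝ)..1, x ^ k * Real.log x ^ m)
    = (-1 : ℝ) ^ m * (Nat.factorial m) / ((k:ℝ) + 1) ^ (m + 1)
  | 0, k, hk => by
    simp only [pow_zero, mul_one, Nat.factorial_zero, Nat.cast_one]
    rw [integral_pow, one_pow, zero_pow (by omega : k + 1 ≠ 0)]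
    norm_num
  | (m+1), k, hk => by
    have hk1 : ((k:ℝ) + 1) ≠ 0 := by positivity
    have hF : ∀ x ∈ Ioo (0:ℝ) 1,
        HasDerivAt (fun x : ℝ => x ^ (k+1) * Real.log x ^ (m+1) / ((k:ℝ)+1))
        (x ^ k * Real.log x ^ (m+1) + ((m:ℝ)+1)/((k:ℝ)+1) * (x ^ k * Real.log x ^ m)) x := by
      intro x hx
      have hx0 : x ≠ 0 := ne_of_gt hx.1
      have h1 : HasDerivAt (fun x : ℝ => x ^ (k+1)) ((k+1 : ℕ) * x ^ k) x := by
        simpa using hasDerivAt_pow (k+1) x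
      have h2 : HasDerivAt (fun x : ℝ => Real.log x ^ (m+1))
          ((m+1 : ℕ) * Real.log x ^ m * x⁻¹) x := by
        simpa using (Real.hasDerivAt_log hx0).fun_pow (m+1)
      have := (h1.mul h2).div_const ((k:ℝ)+1)
      refine this.congr_deriv ?_
      field_simp
      push_cast
      ring
    have hcont : ContinuousOn (fun x : ℝ => x ^ (k+1) * Real.log x ^ (m+1) / ((k:ℝ)+1))
        (Icc (0:ℝ) 1) := (contOn (k+1) (m+1) (by omega)).div_const _
    have hint1 := intble k (m+1) hk
    have hint2 := intble k m hk
    have hG : IntervalIntegrable (fun x : ℝ => x ^ k * Real.log x ^ (m+1)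
        + ((m:ℝ)+1)/((k:ℝ)+1) * (x ^ k * Real.log x ^ m)) volume 0 1 :=
      hint1.add (hint2.const_mul _)
    have key := intervalIntegral.integral_eq_sub_of_hasDeriv_right_of_le zero_le_one hcont
      (fun x hx => (hF x hx).hasDerivWithinAt) hG
    rw [intervalIntegral.integral_add hint1 (hint2.const_mul _),
      intervalIntegral.integral_const_mul] at key
    have hend : (1:ℝ) ^ (k+1) * Real.log 1 ^ (m+1) / ((k:ℝ)+1)
        - (0:ℝ) ^ (k+1) * Real.log 0 ^ (m+1) / ((k:ℝ)+1) = 0 := by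
      simp [Real.log_one, zero_pow (by omega : m + 1 ≠ 0), zero_pow (by omega : k + 1 ≠ 0)]
    rw [hend] at key
    have hJ := intA m k hk
    rw [hJ] at key
    have hI : (∫ x in (0:ℝ)..1, x ^ k * Real.log x ^ (m+1))
        = -(((m:ℝ)+1)/((k:ℝ)+1) * ((-1:ℝ)^m * (Nat.factorial m) / ((k:ℝ)+1)^(m+1))) := by
      linarith [key]
    rw [hI, Nat.factorial_succ]
    push_cast
    field_simp
    ring

set_option maxHeartbeats 1000000 in
lemma intMain (n m : ℕ) (hn : 1 ≤ n) (hm : 1 ≤ m) :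
    (∫ x in (0:ℝ)..1, x ^ n * (Real.log x) ^ m / (1 - x))
      = (-1:ℝ) ^ m * (Nat.factorial m)
          * ∑' j : ℕ, (1:ℝ) / ((n:ℝ) + (j:ℝ) + 1) ^ (m + 1) := by
  have hfint : ∀ j : ℕ, IntegrableOn (fun x : ℝ => x ^ (n + j) * Real.log x ^ m)
      (Ioo (0:ℝ) 1) volume := by
    intro j
    exact (intble (n + j) m (by omega)).1.mono_set Ioo_subset_Ioc_self
  have hval : ∀ j : ℕ, (∫ x in Ioo (0:ℝ) 1, x ^ (n + j) * Real.log x ^ m)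
      = (-1:ℝ) ^ m * (Nat.factorial m) / ((n:ℝ) + (j:ℝ) + 1) ^ (m + 1) := by
    intro j
    have h1 : (∫ x in Ioo (0:ℝ) 1, x ^ (n + j) * Real.log x ^ m)
        = ∫ x in (0:ℝ)..1, x ^ (n + j) * Real.log x ^ m := by
      rw [intervalIntegral.integral_of_le zero_le_one, integral_Ioc_eq_integral_Ioo]
    rw [h1, intA m (n + j) (by omega)]
    push_cast
    ring_nf
  have hnorm : ∀ j : ℕ, (∫ x in Ioo (0:ℝ) 1, ‖x ^ (n + j) * Real.log x ^ m‖)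
      = (Nat.factorial m : ℝ) / ((n:ℝ) + (j:ℝ) + 1) ^ (m + 1) := by
    intro j
    have hcongr : ∀ x ∈ Ioo (0:ℝ) 1, ‖x ^ (n + j) * Real.log x ^ m‖
        = (-1:ℝ) ^ m * (x ^ (n + j) * Real.log x ^ m) := by
      intro x hx
      have hlog : Real.log x ≤ 0 := Real.log_nonpos hx.1.le hx.2.le
      rw [Real.norm_eq_abs, abs_mul, abs_pow, abs_pow, abs_of_nonneg hx.1.le,
        abs_of_nonpos hlog, neg_pow]
      ring
    rw [setIntegral_congr_fun measurableSet_Ioo hcongr, integral_const_mul, hval j,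
      ← mul_div_assoc, ← mul_assoc, ← mul_pow]
    norm_num
  have hsum : Summable (fun j : ℕ => ∫ x in Ioo (0:ℝ) 1, ‖x ^ (n + j) * Real.log x ^ m‖) := by
    have hbase : Summable (fun i : ℕ => (1:ℝ) / (i:ℝ) ^ (m + 1)) :=
      summable_one_div_nat_pow.mpr (by omega)
    have hshift : Summable (fun j : ℕ => (1:ℝ) / ((j + (n + 1) : ℕ):ℝ) ^ (m + 1)) :=
      (summable_nat_add_iff (n + 1)).mpr hbase
    refine ((hshift.mul_left (Nat.factorial m : ℝ)).congr ?_)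
    intro j
    rw [hnorm j]
    push_cast
    rw [mul_one_div]
    ring_nf
  have hswap := MeasureTheory.integral_tsum_of_summable_integral_norm hfint hsum
  have hpt : ∀ x ∈ Ioo (0:ℝ) 1, (∑' j : ℕ, x ^ (n + j) * Real.log x ^ m)
      = x ^ n * Real.log x ^ m / (1 - x) := by
    intro x hx
    have hg : ∑' j : ℕ, x ^ j = (1 - x)⁻¹ := tsum_geometric_of_lt_one hx.1.le hx.2
    calc (∑' j : ℕ, x ^ (n + j) * Real.log x ^ m)
        = ∑' j : ℕ, x ^ j * (x ^ n * Real.log x ^ m) := by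
          apply tsum_congr
          intro j
          rw [pow_add]
          ring
      _ = (∑' j : ℕ, x ^ j) * (x ^ n * Real.log x ^ m) := tsum_mul_right
      _ = x ^ n * Real.log x ^ m / (1 - x) := by rw [hg, inv_mul_eq_div]
  have hLHS : (∫ x in (0:ℝ)..1, x ^ n * (Real.log x) ^ m / (1 - x))
      = ∑' j : ℕ, (∫ x in Ioo (0:ℝ) 1, x ^ (n + j) * Real.log x ^ m) := by
    rw [intervalIntegral.integral_of_le zero_le_one, integral_Ioc_eq_integral_Ioo, hswap]
    exact (setIntegral_congr_fun measurableSet_Ioo hpt).symm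
  rw [hLHS, ← tsum_mul_left]
  apply tsum_congr
  intro j
  rw [hval j, mul_one_div, mul_div_assoc]

/-- Riemann zeta value (real series). -/
noncomputable def rz (s : ℝ) : ℝ := ∑' n : ℕ, 1 / ((n : ℝ) + 1) ^ s

theorem stmt_6 (n m : ℕ) (hn : 1 ≤ n) (hm : 1 ≤ m) :
    ∫ x in (0:ℝ)..1, x ^ n * (Real.log x) ^ m / (1 - x)
      = (-1 : ℝ) ^ m * (Nat.factorial m)
          * (rz ((m : ℝ) + 1) - ∑ j ∈ Finset.Icc 1 n, (1 : ℝ) / (j : ℝ) ^ (m + 1)) := by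
  have hbase : Summable (fun i : ℕ => (1:ℝ) / (i:ℝ) ^ (m + 1)) :=
    summable_one_div_nat_pow.mpr (by omega)
  have hbase1 : Summable (fun i : ℕ => (1:ℝ) / ((i:ℝ) + 1) ^ (m + 1)) := by
    refine ((summable_nat_add_iff 1).mpr hbase).congr (fun i => ?_)
    push_cast
    ring_nf
  have hrz : rz ((m:ℝ) + 1) = ∑' i : ℕ, (1:ℝ) / ((i:ℝ) + 1) ^ (m + 1) := by
    rw [rz]
    apply tsum_congr
    intro i
    congr 1
    rw [show (m:ℝ) + 1 = ((m + 1 : ℕ) : ℝ) by push_cast; ring, Real.rpow_natCast]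
  have hsplit := Summable.sum_add_tsum_nat_add (f := fun i : ℕ => (1:ℝ) / ((i:ℝ) + 1) ^ (m + 1)) n hbase1
  have hfin : (∑ i ∈ Finset.range n, (1:ℝ) / ((i:ℝ) + 1) ^ (m + 1))
      = ∑ j ∈ Finset.Icc 1 n, (1:ℝ) / (j:ℝ) ^ (m + 1) := by
    rw [← Finset.Ico_add_one_right_eq_Icc, Finset.sum_Ico_eq_sum_range]
    simp only [Nat.add_sub_cancel_left, Nat.succ_sub_one, Nat.add_sub_cancel]
    apply Finset.sum_congr rfl
    intro i _
    push_cast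
    ring_nf
  have htail : (∑' i : ℕ, (1:ℝ) / (((i + n : ℕ):ℝ) + 1) ^ (m + 1))
      = ∑' j : ℕ, (1:ℝ) / ((n:ℝ) + (j:ℝ) + 1) ^ (m + 1) := by
    apply tsum_congr
    intro i
    push_cast
    ring_nf
  have hZS : (∑' i : ℕ, (1:ℝ) / ((i:ℝ) + 1) ^ (m + 1))
      - (∑ j ∈ Finset.Icc 1 n, (1:ℝ) / (j:ℝ) ^ (m + 1))
      = ∑' j : ℕ, (1:ℝ) / ((n:ℝ) + (j:ℝ) + 1) ^ (m + 1) := by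
    rw [← hsplit, hfin, add_sub_cancel_left, ← htail]
  rw [intMain n m hn hm, hrz, hZS]
end

section
/- For every integer m ≥ 0, the multiple zeta star value ζ*(2,{1}_m) = ∑_{n₁ ≥ n₂ ≥ ⋯ ≥ n_{m+1} ≥ 1} 1/(n₁² n₂ ⋯ n_{m+1}) equals (m+1)·ζ(m+2). -/
/-- Multiple zeta star value. -/
noncomputable def mzvStar : List ℝ → ℝ
  | [] => 1
  | s :: t => ∑' k : ℕ, (1 / ((k : ℝ) + 1) ^ s) * mhStar t (k + 1)

open Real Finset MeasureTheory Set



noncomputable def hstar : ℕ → ℕ → ℝ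
  | 0, _ => 1
  | m+1, n => ∑ k ∈ Finset.Icc 1 n, (1/(k:ℝ)) * hstar m k

lemma hstar_zero (n : ℕ) : hstar 0 n = 1 := rfl

lemma hstar_succ (m n : ℕ) : hstar (m+1) n = ∑ k ∈ Finset.Icc 1 n, (1/(k:ℝ)) * hstar m k := rfl

lemma hstar_nonneg (m n : ℕ) : 0 ≤ hstar m n := by
  induction m generalizing n with
  | zero => simp [hstar_zero]
  | succ m ih =>
    rw [hstar_succ]
    exact Finset.sum_nonneg fun k _ => mul_nonneg (by positivity) (ih k)

/-- hockey-stick type identity -/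
lemma sum_choose_div (i : ℕ) :
    ∀ n, i + 1 ≤ n → ∑ k ∈ Finset.Icc (i+1) n, ((k.choose (i+1) : ℝ))/k
      = (n.choose (i+1))/(i+1) := by
  intro n
  induction n with
  | zero => intro h; omega
  | succ n ih =>
    intro hjn
    rcases Nat.lt_or_ge n (i+1) with h | h
    · have hj' : i + 1 = n + 1 := by omega
      rw [← hj']
      simp [Nat.choose_self]
    · rw [← Finset.Ico_add_one_right_eq_Icc, Finset.sum_Ico_succ_top (by omega), Finset.Ico_add_one_right_eq_Icc, ih h]
      have key : ((n+1) : ℝ) * (n.choose i) = ((n+1).choose (i+1)) * (i+1) := by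
        exact_mod_cast Nat.add_one_mul_choose_eq n i
      have pascal : (((n+1).choose (i+1) : ℝ)) = n.choose (i+1) + n.choose i := by
        rw [Nat.choose_succ_succ' n i]
        push_cast; ring
      have hjR : ((i:ℝ)+1) ≠ 0 := by positivity
      have hnR : ((n:ℝ)+1) ≠ 0 := by positivity
      have e3 : (((n+1).choose (i+1) : ℝ))/(n+1) = (n.choose i)/(i+1) := by
        rw [div_eq_div_iff hnR hjR]
        push_cast at key ⊢
        linarith [key]
      push_cast
      push_cast at e3 pascal
      rw [e3, ← add_div, ← pascal]

/-- Dilcher's identity -/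
lemma hstar_eq_dilcher (m : ℕ) : ∀ n, 1 ≤ n →
    hstar m n = ∑ j ∈ Finset.Icc 1 n, (-1:ℝ)^(j-1) * (n.choose j) / (j:ℝ)^m := by
  induction m with
  | zero =>
    intro n hn
    rw [hstar_zero]
    have h := Int.alternating_sum_range_choose_of_ne (n := n) (by omega)
    have h' : (∑ j ∈ Finset.range (n + 1), ((-1:ℝ) ^ j * n.choose j)) = 0 := by
      exact_mod_cast congrArg (fun z : ℤ => (z : ℝ)) h
    rw [Finset.sum_range_succ'] at h'
    simp only [pow_zero, one_mul, Nat.choose_zero_right, Nat.cast_one] at h'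
    have e1 : ∑ j ∈ Finset.Icc 1 n, (-1:ℝ)^(j-1) * (n.choose j) / (j:ℝ)^0
        = ∑ i ∈ Finset.range n, (-1:ℝ)^i * (n.choose (i+1)) := by
      rw [← Finset.Ico_add_one_right_eq_Icc, Finset.sum_Ico_eq_sum_range]
      simp only [pow_zero, div_one, Nat.add_sub_cancel]
      apply Finset.sum_congr rfl
      intro i _
      have hi : 1 + i - 1 = i := by omega
      rw [hi, add_comm 1 i]
    rw [e1]
    have e2 : ∑ i ∈ Finset.range n, (-1:ℝ)^i * (n.choose (i+1))
        = - ∑ i ∈ Finset.range n, (-1:ℝ)^(i+1) * (n.choose (i+1)) := by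
      rw [← Finset.sum_neg_distrib]
      apply Finset.sum_congr rfl
      intro i _
      ring
    rw [e2]
    linarith [h']
  | succ m ih =>
    intro n hn
    rw [hstar_succ]
    have step1 : ∑ k ∈ Finset.Icc 1 n, (1/(k:ℝ)) * hstar m k
        = ∑ k ∈ Finset.Icc 1 n, ∑ j ∈ Finset.Icc 1 k,
            (1/(k:ℝ)) * ((-1:ℝ)^(j-1) * (k.choose j) / (j:ℝ)^m) := by
      apply Finset.sum_congr rfl
      intro k hk
      rw [Finset.mem_Icc] at hk
      rw [ih k hk.1, Finset.mul_sum]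
    rw [step1]
    have swap : ∑ k ∈ Finset.Icc 1 n, ∑ j ∈ Finset.Icc 1 k,
            (1/(k:ℝ)) * ((-1:ℝ)^(j-1) * (k.choose j) / (j:ℝ)^m)
        = ∑ j ∈ Finset.Icc 1 n, ∑ k ∈ Finset.Icc j n,
            (1/(k:ℝ)) * ((-1:ℝ)^(j-1) * (k.choose j) / (j:ℝ)^m) := by
      have h1 : ∀ k, Finset.Icc 1 k = Finset.Ico 1 (k+1) := fun k => by
        rw [Finset.Ico_add_one_right_eq_Icc]
      have h2 : ∀ j : ℕ, Finset.Icc j n = Finset.Ico j (n+1) := fun j => by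
        rw [Finset.Ico_add_one_right_eq_Icc]
      simp_rw [h1, h2]
      conv_rhs => rw [Finset.sum_Ico_Ico_comm]
    rw [swap]
    apply Finset.sum_congr rfl
    intro j hj
    rw [Finset.mem_Icc] at hj
    have inner : ∑ k ∈ Finset.Icc j n, (1/(k:ℝ)) * ((-1:ℝ)^(j-1) * (k.choose j) / (j:ℝ)^m)
        = ((-1:ℝ)^(j-1) / (j:ℝ)^m) * ∑ k ∈ Finset.Icc j n, ((k.choose j : ℝ))/k := by
      rw [Finset.mul_sum]
      apply Finset.sum_congr rfl
      intro k _
      ring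
    obtain ⟨i, rfl⟩ : ∃ i, j = i + 1 := ⟨j - 1, by omega⟩
    rw [inner, sum_choose_div i n hj.2]
    have hjR : ((i:ℝ)+1) ≠ 0 := by positivity
    have hi : i + 1 - 1 = i := by omega
    rw [hi]
    push_cast
    rw [pow_succ]
    field_simp



lemma integrable_pow_exp (m : ℕ) {b : ℝ} (hb : 0 < b) :
    IntegrableOn (fun t : ℝ => t^m * Real.exp (-(b*t))) (Ioi 0) := by
  have h := integrableOn_rpow_mul_exp_neg_mul_rpow (p := 1) (s := (m:ℝ))
      (lt_of_lt_of_le (by norm_num) (Nat.cast_nonneg m)) zero_lt_one hb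
  apply h.congr_fun _ measurableSet_Ioi
  intro x hx
  simp only [Real.rpow_one, Real.rpow_natCast, neg_mul]

lemma integral_pow_exp (m : ℕ) {b : ℝ} (hb : 0 < b) :
    ∫ t in Ioi (0:ℝ), t^m * Real.exp (-(b*t)) = m.factorial / b^(m+1) := by
  have h := Real.integral_rpow_mul_exp_neg_mul_Ioi (a := (m:ℝ)+1) (r := b)
      (by positivity) hb
  have e1 : ∫ t in Ioi (0:ℝ), t^m * Real.exp (-(b*t))
      = ∫ t in Ioi (0:ℝ), t ^ ((m:ℝ)+1-1) * Real.exp (-(b*t)) := by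
    apply setIntegral_congr_fun measurableSet_Ioi
    intro x hx
    simp only [add_sub_cancel_right, Real.rpow_natCast]
  have e2 : (1/b) ^ ((m:ℝ)+1) = (1/b)^(m+1 : ℕ) := by
    rw [← Real.rpow_natCast (1/b) (m+1)]
    norm_num
  rw [e1, h, e2, Real.Gamma_nat_eq_factorial]
  rw [one_div, inv_pow]
  field_simp



/-- pointwise binomial expansion -/
lemma expand_pointwise (m k : ℕ) (u : ℝ) :
    u^m * Real.exp (-u) * (1 - Real.exp (-u))^k
      = ∑ i ∈ Finset.range (k+1), ((k.choose i : ℝ) * (-1)^i) * (u^m * Real.exp (-(((i:ℝ)+1)*u))) := by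
  have hb : (1 - Real.exp (-u))^k = ∑ i ∈ Finset.range (k+1),
      (-Real.exp (-u))^i * 1^(k-i) * (k.choose i) := by
    rw [show (1 - Real.exp (-u)) = (-Real.exp (-u)) + 1 by ring, add_pow]
  rw [hb, Finset.mul_sum]
  apply Finset.sum_congr rfl
  intro i _
  have he : Real.exp (-u) ^ i = Real.exp (-((i:ℝ)*u)) := by
    rw [← Real.exp_nat_mul]
    ring_nf
  have he2 : Real.exp (-u) * Real.exp (-((i:ℝ)*u)) = Real.exp (-(((i:ℝ)+1)*u)) := by
    rw [← Real.exp_add]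
    ring_nf
  rw [one_pow, mul_one, neg_pow, he, ← he2]
  ring

lemma J_eq (m k : ℕ) :
    ∫ u in Ioi (0:ℝ), u^m * Real.exp (-u) * (1 - Real.exp (-u))^k
      = m.factorial * hstar m (k+1) / ((k:ℝ)+1) := by
  have e1 : ∫ u in Ioi (0:ℝ), u^m * Real.exp (-u) * (1 - Real.exp (-u))^k
      = ∑ i ∈ Finset.range (k+1), ((k.choose i : ℝ) * (-1)^i) * (m.factorial / ((i:ℝ)+1)^(m+1)) := by
    rw [show (fun u : ℝ => u^m * Real.exp (-u) * (1 - Real.exp (-u))^k)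
        = (fun u : ℝ => ∑ i ∈ Finset.range (k+1),
            ((k.choose i : ℝ) * (-1)^i) * (u^m * Real.exp (-(((i:ℝ)+1)*u))))
      from funext fun u => expand_pointwise m k u]
    rw [integral_finset_sum]
    · apply Finset.sum_congr rfl
      intro i _
      rw [integral_const_mul, integral_pow_exp m (by positivity : (0:ℝ) < (i:ℝ)+1)]
    · intro i _
      exact (integrable_pow_exp m (by positivity : (0:ℝ) < (i:ℝ)+1)).const_mul _
  rw [e1, hstar_eq_dilcher m (k+1) (by omega)]
  rw [Finset.mul_sum, Finset.sum_div, ← Finset.Ico_add_one_right_eq_Icc, Finset.sum_Ico_eq_sum_range]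
  apply Finset.sum_congr (by norm_num)
  intro i _
  have hi : 1 + i - 1 = i := by omega
  rw [hi]
  have key : ((k:ℝ)+1) * (k.choose i) = ((k+1).choose (i+1)) * ((i:ℝ)+1) := by
    exact_mod_cast Nat.add_one_mul_choose_eq k i
  have h1 : ((i:ℝ)+1) ≠ 0 := by positivity
  have h2 : ((k:ℝ)+1) ≠ 0 := by positivity
  have hc : ((1+i : ℕ):ℝ) = (i:ℝ)+1 := by push_cast; ring
  rw [show ((k+1).choose (1+i)) = ((k+1).choose (i+1)) by rw [add_comm 1 i], hc]
  rw [pow_succ]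
  field_simp
  linear_combination key



lemma sum_inv_le (n : ℕ) : ∑ k ∈ Finset.Icc 1 n, (1/(k:ℝ)) ≤ 1 + Real.log n := by
  have h := harmonic_le_one_add_log n
  have e : (harmonic n : ℝ) = ∑ k ∈ Finset.Icc 1 n, (1/(k:ℝ)) := by
    rw [harmonic_eq_sum_Icc]
    push_cast
    simp [one_div]
  linarith [h, e.ge, e.le]

lemma hstar_le_log (m : ℕ) : ∀ n, 1 ≤ n → hstar m n ≤ (1 + Real.log n)^m := by
  induction m with
  | zero => intro n _; simp [hstar_zero]
  | succ m ih =>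
    intro n hn
    rw [hstar_succ]
    have hlogn : (0:ℝ) ≤ 1 + Real.log n := by
      have : (0:ℝ) ≤ Real.log n := Real.log_nonneg (by exact_mod_cast hn)
      linarith
    calc ∑ k ∈ Finset.Icc 1 n, (1/(k:ℝ)) * hstar m k
        ≤ ∑ k ∈ Finset.Icc 1 n, (1/(k:ℝ)) * (1 + Real.log n)^m := by
          apply Finset.sum_le_sum
          intro k hk
          rw [Finset.mem_Icc] at hk
          apply mul_le_mul_of_nonneg_left _ (by positivity)
          calc hstar m k ≤ (1 + Real.log k)^m := ih k hk.1
            _ ≤ (1 + Real.log n)^m := by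
                apply pow_le_pow_left₀
                · have : (0:ℝ) ≤ Real.log k := Real.log_nonneg (by exact_mod_cast hk.1)
                  linarith
                · have : Real.log k ≤ Real.log n := by
                    apply Real.log_le_log (by exact_mod_cast hk.1)
                    exact_mod_cast hk.2
                  linarith
      _ = (∑ k ∈ Finset.Icc 1 n, (1/(k:ℝ))) * (1 + Real.log n)^m := by
          rw [Finset.sum_mul]
      _ ≤ (1 + Real.log n) * (1 + Real.log n)^m := by
          apply mul_le_mul_of_nonneg_right (sum_inv_le n) (by positivity)
      _ = (1 + Real.log n)^(m+1) := by ring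

lemma log_le_rpow (m : ℕ) {x : ℝ} (hx : 1 ≤ x) :
    1 + Real.log x ≤ (2*(m:ℝ)+2) * x ^ ((1:ℝ)/(2*(m:ℝ)+2)) := by
  set ε : ℝ := (1:ℝ)/(2*(m:ℝ)+2) with hε
  have hεpos : 0 < ε := by positivity
  have hx0 : 0 < x := by linarith
  set y := x ^ ε with hy
  have hy1 : 1 ≤ y := Real.one_le_rpow hx hεpos.le
  have hlog : Real.log y = ε * Real.log x := Real.log_rpow hx0 ε
  have hle : Real.log y ≤ y - 1 := Real.log_le_sub_one_of_pos (by linarith)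
  have hM : (2*(m:ℝ)+2) * ε = 1 := by
    rw [hε]; field_simp
  have h1 : Real.log x = (2*(m:ℝ)+2) * Real.log y := by
    rw [hlog]
    rw [show (2*(m:ℝ)+2) * (ε * Real.log x) = ((2*(m:ℝ)+2) * ε) * Real.log x by ring, hM]
    ring
  have h2 : Real.log x ≤ (2*(m:ℝ)+2) * (y - 1) := by
    rw [h1]
    apply mul_le_mul_of_nonneg_left hle (by positivity)
  have hm1 : (1:ℝ) ≤ 2*(m:ℝ)+2 := by
    have : (0:ℝ) ≤ (m:ℝ) := Nat.cast_nonneg m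
    linarith
  nlinarith [h2, hy1, hm1]

lemma summable_rpow_shift : Summable (fun k : ℕ => ((k:ℝ)+1) ^ (-(3/2) : ℝ)) := by
  have h : Summable (fun n : ℕ => (n:ℝ) ^ (-(3/2) : ℝ)) := by
    rw [Real.summable_nat_rpow]
    norm_num
  have h2 := h.comp_injective (Nat.succ_injective)
  apply h2.congr
  intro k
  simp only [Function.comp_apply, Nat.succ_eq_add_one]
  push_cast
  ring_nf

lemma summable_main (m : ℕ) : Summable (fun k : ℕ => hstar m (k+1) / ((k:ℝ)+1)^2) := by
  apply Summable.of_nonneg_of_le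
      (fun k => div_nonneg (hstar_nonneg m (k+1)) (by positivity))
      (fun k => ?_) (summable_rpow_shift.mul_left ((2*(m:ℝ)+2)^m))
  set x : ℝ := (k:ℝ)+1 with hx
  have hx1 : (1:ℝ) ≤ x := by
    rw [hx]; norm_num
  have hx0 : (0:ℝ) < x := by linarith
  set ε : ℝ := (1:ℝ)/(2*(m:ℝ)+2) with hε
  have hεpos : 0 < ε := by positivity
  have b1 : hstar m (k+1) ≤ (1 + Real.log x)^m := by
    have := hstar_le_log m (k+1) (by omega)
    rw [hx]
    push_cast at this ⊢
    exact this
  have b2 : (1 + Real.log x)^m ≤ ((2*(m:ℝ)+2) * x ^ ε)^m := by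
    apply pow_le_pow_left₀
    · have : (0:ℝ) ≤ Real.log x := Real.log_nonneg hx1
      linarith
    · exact log_le_rpow m hx1
  have b3 : ((2*(m:ℝ)+2) * x ^ ε)^m = (2*(m:ℝ)+2)^m * x ^ (ε * m) := by
    rw [mul_pow]
    congr 1
    rw [Real.rpow_mul hx0.le, Real.rpow_natCast]
  have b4 : hstar m (k+1) / x^2 ≤ (2*(m:ℝ)+2)^m * x ^ (ε * m) / x^2 := by
    apply div_le_div_of_nonneg_right _ (by positivity)
    · calc hstar m (k+1) ≤ (1 + Real.log x)^m := b1
        _ ≤ ((2*(m:ℝ)+2) * x ^ ε)^m := b2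
        _ = (2*(m:ℝ)+2)^m * x ^ (ε * m) := b3
  have b5 : (2*(m:ℝ)+2)^m * x ^ (ε * m) / x^2 = (2*(m:ℝ)+2)^m * x ^ (ε * m - 2) := by
    rw [mul_div_assoc]
    congr 1
    rw [Real.rpow_sub hx0, Real.rpow_two]
  have b6 : x ^ (ε * m - 2) ≤ x ^ (-(3/2) : ℝ) := by
    apply Real.rpow_le_rpow_of_exponent_le hx1
    have hεm : ε * m ≤ 1/2 := by
      rw [hε, div_mul_eq_mul_div, div_le_div_iff₀ (by positivity) (by norm_num)]
      have : (0:ℝ) ≤ (m:ℝ) := Nat.cast_nonneg m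
      linarith
    linarith
  calc hstar m (k+1) / x^2 ≤ (2*(m:ℝ)+2)^m * x ^ (ε * m) / x^2 := b4
    _ = (2*(m:ℝ)+2)^m * x ^ (ε * m - 2) := b5
    _ ≤ (2*(m:ℝ)+2)^m * x ^ (-(3/2) : ℝ) := by
        apply mul_le_mul_of_nonneg_left b6 (by positivity)



noncomputable def Ff (m k : ℕ) : ℝ → ℝ :=
  fun u => (1/((k:ℝ)+1)) * (u^m * Real.exp (-u) * (1 - Real.exp (-u))^k)

noncomputable def Gg (m j : ℕ) : ℝ → ℝ :=
  fun u => u^(m+1) * Real.exp (-(((j:ℝ)+1)*u))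

lemma summable_inv_pow (m : ℕ) : Summable (fun j : ℕ => 1 / ((j:ℝ)+1)^(m+2)) := by
  apply Summable.of_nonneg_of_le (fun j => by positivity) (fun j => ?_) summable_rpow_shift
  have hx1 : (1:ℝ) ≤ (j:ℝ)+1 := by norm_num
  have hx0 : (0:ℝ) < (j:ℝ)+1 := by linarith
  rw [show ((j:ℝ)+1)^(m+2) = ((j:ℝ)+1)^((m+2 : ℕ):ℝ) by rw [Real.rpow_natCast],
    one_div, ← Real.rpow_neg hx0.le]
  apply Real.rpow_le_rpow_of_exponent_le hx1
  push_cast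
  linarith [Nat.cast_nonneg (α := ℝ) m]

lemma integrable_Ff (m k : ℕ) : IntegrableOn (Ff m k) (Ioi 0) := by
  apply Integrable.const_mul
  apply Integrable.mono' ((integrable_pow_exp m one_pos).congr_fun
      (fun x _ => show _ = x^m * Real.exp (-x) by simp only [one_mul]) measurableSet_Ioi)
  · apply ContinuousOn.aestronglyMeasurable _ measurableSet_Ioi
    fun_prop
  · filter_upwards [ae_restrict_mem measurableSet_Ioi] with u hu
    rw [Set.mem_Ioi] at hu
    have h1 : 0 < Real.exp (-u) := Real.exp_pos _
    have h2 : Real.exp (-u) < 1 := by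
      rw [Real.exp_lt_one_iff]
      linarith
    have h3 : (0:ℝ) ≤ 1 - Real.exp (-u) := by linarith
    have h4 : (1 - Real.exp (-u))^k ≤ 1 := by
      apply pow_le_one₀ h3
      linarith
    rw [Real.norm_eq_abs, abs_of_nonneg (by positivity)]
    calc u^m * Real.exp (-u) * (1 - Real.exp (-u))^k
        ≤ u^m * Real.exp (-u) * 1 := by
          apply mul_le_mul_of_nonneg_left h4 (by positivity)
      _ = u^m * Real.exp (-u) := by ring
lemma integral_Ff (m k : ℕ) :
    ∫ u in Ioi (0:ℝ), Ff m k u = m.factorial * (hstar m (k+1) / ((k:ℝ)+1)^2) := by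
  unfold Ff
  rw [integral_const_mul, J_eq m k, div_mul_div_comm, one_mul, ← pow_two, mul_div_assoc]

lemma integral_Gg (m j : ℕ) :
    ∫ u in Ioi (0:ℝ), Gg m j u = (m+1).factorial / ((j:ℝ)+1)^(m+2) := by
  unfold Gg
  rw [integral_pow_exp (m+1) (by positivity : (0:ℝ) < (j:ℝ)+1)]

lemma pointwise_sums {u : ℝ} (hu : 0 < u) (m : ℕ) :
    ∑' k, Ff m k u = ∑' j, Gg m j u := by
  set r := Real.exp (-u) with hr
  have h1 : 0 < r := Real.exp_pos _
  have h2 : r < 1 := by rw [hr, Real.exp_lt_one_iff]; linarith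
  set v := 1 - r with hv
  have hv0 : 0 < v := by linarith
  have hv1 : |v| < 1 := by rw [abs_of_pos hv0]; linarith
  have T : ℝ := u^(m+1) * r / v
  have hF : HasSum (fun k : ℕ => Ff m k u) (u^(m+1) * r / v) := by
    have h := hasSum_pow_div_log_of_abs_lt_one hv1
    have hlog : -Real.log (1 - v) = u := by
      rw [hv]
      simp [hr, Real.log_exp]
    rw [hlog] at h
    have h' := h.mul_right (u^m * r / v)
    have : (fun n : ℕ => v ^ (n+1) / ((n:ℝ)+1) * (u^m * r / v)) = fun n : ℕ => Ff m n u := by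
      funext n
      unfold Ff
      rw [hv, ← hr]
      have hvne : (1:ℝ) - r ≠ 0 := ne_of_gt (by linarith)
      field_simp
      ring
    rw [this] at h'
    have e : u^(m+1) * r / v = u * (u^m * r / v) := by ring
    rw [e]; exact h'
  have hG : HasSum (fun j : ℕ => Gg m j u) (u^(m+1) * r / v) := by
    have h := hasSum_geometric_of_lt_one h1.le h2
    have h' := h.mul_right (u^(m+1) * r)
    have : (fun j : ℕ => r ^ j * (u^(m+1) * r)) = fun j : ℕ => Gg m j u := by
      funext j
      unfold Gg
      have he : Real.exp (-(((j:ℝ)+1)*u)) = r^(j+1) := by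
        rw [hr, ← Real.exp_nat_mul]
        congr 1
        push_cast
        ring
      rw [he, pow_succ]
      ring
    rw [this] at h'
    have e : u^(m+1) * r / v = (1 - r)⁻¹ * (u^(m+1) * r) := by rw [hv]; ring
    rw [e]; exact h'
  rw [hF.tsum_eq, hG.tsum_eq]

lemma lint_eq_ofReal {f : ℝ → ℝ} (hf : IntegrableOn f (Ioi 0))
    (hnn : ∀ u ∈ Ioi (0:ℝ), 0 ≤ f u) :
    ∫⁻ u in Ioi (0:ℝ), ‖f u‖₊ = ENNReal.ofReal (∫ u in Ioi (0:ℝ), f u) := by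
  have hnn' : 0 ≤ᵐ[volume.restrict (Ioi (0:ℝ))] f := by
    filter_upwards [ae_restrict_mem measurableSet_Ioi] with u hu
    exact hnn u hu
  rw [MeasureTheory.ofReal_integral_eq_lintegral_ofReal hf hnn']
  apply lintegral_congr_ae
  filter_upwards [hnn'] with u hu
  rw [← Real.enorm_eq_ofReal hu]
  rfl

theorem main_tsum (m : ℕ) :
    (m.factorial : ℝ) * ∑' k : ℕ, hstar m (k+1) / ((k:ℝ)+1)^2
      = ((m+1).factorial : ℝ) * ∑' j : ℕ, 1 / ((j:ℝ)+1)^(m+2) := by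
  have hFmeas : ∀ k : ℕ, AEStronglyMeasurable (Ff m k) (volume.restrict (Ioi 0)) := by
    intro k
    apply ContinuousOn.aestronglyMeasurable _ measurableSet_Ioi
    unfold Ff; fun_prop
  have hGmeas : ∀ j : ℕ, AEStronglyMeasurable (Gg m j) (volume.restrict (Ioi 0)) := by
    intro j
    apply ContinuousOn.aestronglyMeasurable _ measurableSet_Ioi
    unfold Gg; fun_prop
  have hFnn : ∀ k : ℕ, ∀ u ∈ Ioi (0:ℝ), 0 ≤ Ff m k u := by
    intro k u hu
    rw [Set.mem_Ioi] at hu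
    have h2 : Real.exp (-u) ≤ 1 := by
      rw [Real.exp_le_one_iff]; linarith
    unfold Ff
    have : (0:ℝ) ≤ 1 - Real.exp (-u) := by linarith
    positivity
  have hGnn : ∀ j : ℕ, ∀ u ∈ Ioi (0:ℝ), 0 ≤ Gg m j u := by
    intro j u hu
    rw [Set.mem_Ioi] at hu
    unfold Gg
    positivity
  have hGint : ∀ j : ℕ, IntegrableOn (Gg m j) (Ioi 0) := by
    intro j
    unfold Gg
    exact integrable_pow_exp (m+1) (by positivity : (0:ℝ) < (j:ℝ)+1)
  have hFsum : Summable (fun k : ℕ => (m.factorial : ℝ) * (hstar m (k+1) / ((k:ℝ)+1)^2)) :=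
    (summable_main m).mul_left _
  have hFnn' : ∀ k : ℕ, 0 ≤ (m.factorial : ℝ) * (hstar m (k+1) / ((k:ℝ)+1)^2) := by
    intro k
    have := hstar_nonneg m (k+1)
    positivity
  have hF' : ∑' k : ℕ, ∫⁻ u in Ioi (0:ℝ), ‖Ff m k u‖₊ ≠ ⊤ := by
    have : ∀ k : ℕ, ∫⁻ u in Ioi (0:ℝ), ‖Ff m k u‖₊
        = ENNReal.ofReal ((m.factorial : ℝ) * (hstar m (k+1) / ((k:ℝ)+1)^2)) := by
      intro k
      rw [lint_eq_ofReal (integrable_Ff m k) (hFnn k), integral_Ff m k]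
    rw [tsum_congr this, ← ENNReal.ofReal_tsum_of_nonneg hFnn' hFsum]
    exact ENNReal.ofReal_ne_top
  have hGsum : Summable (fun j : ℕ => ((m+1).factorial : ℝ) * (1 / ((j:ℝ)+1)^(m+2))) :=
    (summable_inv_pow m).mul_left _
  have hG' : ∑' j : ℕ, ∫⁻ u in Ioi (0:ℝ), ‖Gg m j u‖₊ ≠ ⊤ := by
    have : ∀ j : ℕ, ∫⁻ u in Ioi (0:ℝ), ‖Gg m j u‖₊
        = ENNReal.ofReal (((m+1).factorial : ℝ) * (1 / ((j:ℝ)+1)^(m+2))) := by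
      intro j
      rw [lint_eq_ofReal (hGint j) (hGnn j), integral_Gg m j]
      congr 1
      field_simp
    rw [tsum_congr this, ← ENNReal.ofReal_tsum_of_nonneg (fun j => by positivity) hGsum]
    exact ENNReal.ofReal_ne_top
  have step1 : ∑' k : ℕ, ∫ u in Ioi (0:ℝ), Ff m k u
      = ∫ u in Ioi (0:ℝ), ∑' k : ℕ, Ff m k u :=
    (MeasureTheory.integral_tsum hFmeas hF').symm
  have step2 : ∫ u in Ioi (0:ℝ), ∑' k : ℕ, Ff m k u
      = ∫ u in Ioi (0:ℝ), ∑' j : ℕ, Gg m j u := by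
    apply setIntegral_congr_fun measurableSet_Ioi
    intro u hu
    rw [Set.mem_Ioi] at hu
    exact pointwise_sums hu m
  have step3 : ∫ u in Ioi (0:ℝ), ∑' j : ℕ, Gg m j u
      = ∑' j : ℕ, ∫ u in Ioi (0:ℝ), Gg m j u :=
    MeasureTheory.integral_tsum hGmeas hG'
  have lhs : ∑' k : ℕ, ∫ u in Ioi (0:ℝ), Ff m k u
      = (m.factorial : ℝ) * ∑' k : ℕ, hstar m (k+1) / ((k:ℝ)+1)^2 := by
    rw [tsum_congr (integral_Ff m), tsum_mul_left]
  have rhs : ∑' j : ℕ, ∫ u in Ioi (0:ℝ), Gg m j u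
      = ((m+1).factorial : ℝ) * ∑' j : ℕ, 1 / ((j:ℝ)+1)^(m+2) := by
    rw [tsum_congr (integral_Gg m), ← tsum_mul_left]
    apply tsum_congr
    intro j
    field_simp
  rw [← lhs, step1, step2, step3, rhs]

lemma mhStar_replicate (m : ℕ) : ∀ n, mhStar (List.replicate m 1) n = hstar m n := by
  induction m with
  | zero => intro n; rw [hstar_zero]; rfl
  | succ m ih =>
    intro n
    rw [List.replicate_succ, hstar_succ]
    show ∑ k ∈ Finset.Icc 1 n, (1 / (k : ℝ) ^ (1:ℝ)) * mhStar (List.replicate m 1) k = _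
    apply Finset.sum_congr rfl
    intro k _
    rw [Real.rpow_one, ih k]

theorem stmt_11 (m : ℕ) :
    mzvStar (2 :: List.replicate m 1) = ((m : ℝ) + 1) * rz ((m : ℝ) + 2) := by
  have e1 : mzvStar (2 :: List.replicate m 1)
      = ∑' k : ℕ, hstar m (k+1) / ((k:ℝ)+1)^2 := by
    show (∑' k : ℕ, (1 / ((k : ℝ) + 1) ^ (2:ℝ)) * mhStar (List.replicate m 1) (k + 1)) = _
    apply tsum_congr
    intro k
    rw [mhStar_replicate m (k+1),
      show (2:ℝ) = ((2:ℕ):ℝ) by norm_num, Real.rpow_natCast]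
    rw [one_div, div_eq_mul_inv, mul_comm]
  have e2 : rz ((m : ℝ) + 2) = ∑' j : ℕ, 1 / ((j:ℝ)+1)^(m+2) := by
    unfold rz
    apply tsum_congr
    intro j
    rw [show ((m:ℝ) + 2) = ((m+2 : ℕ):ℝ) by push_cast; ring, Real.rpow_natCast]
  rw [e1, e2]
  have h := main_tsum m
  have hfac : ((m+1).factorial : ℝ) = ((m:ℝ)+1) * m.factorial := by
    rw [Nat.factorial_succ]
    push_cast
    ring
  rw [hfac] at h
  have hne : (m.factorial : ℝ) ≠ 0 := by
    exact_mod_cast Nat.factorial_ne_zero m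
  apply mul_left_cancel₀ hne
  rw [h]
  ring
end

section
/- For all integers n ≥ 1 and m ≥ 1, ∑_{i=1}^m ζ*_n({1}_{i-1}, 2, {1}_{m-i}) = ∑_{i=1}^m ζ_n(m+2-i) · ζ*_n({1}_{i-1}), where ζ*_n denotes multiple harmonic star numbers and ζ_n(s) = ∑_{j=1}^n 1/j^s. -/
noncomputable def pS (s n : ℕ) : ℝ := ∑ j ∈ Finset.Icc 1 n, (1 : ℝ) / (j : ℝ) ^ s

noncomputable def hS (b n : ℕ) : ℝ := mhStar (List.replicate b 1) n

noncomputable def LL (m n : ℕ) : ℝ :=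
  ∑ i ∈ Finset.range m, mhStar (List.replicate i 1 ++ 2 :: List.replicate (m - 1 - i) 1) n

noncomputable def RR (m n : ℕ) : ℝ :=
  ∑ i ∈ Finset.range m, pS (m + 1 - i) n * hS i n

lemma mhStar_nil (n : ℕ) : mhStar [] n = 1 := rfl

lemma mhStar_zero (l : List ℝ) (hl : l ≠ []) : mhStar l 0 = 0 := by
  cases l with
  | nil => exact absurd rfl hl
  | cons s t => simp [mhStar]

lemma mhStar_cons_succ (s : ℝ) (t : List ℝ) (n : ℕ) :
    mhStar (s :: t) (n + 1)
      = mhStar (s :: t) n + (1 / ((n : ℝ) + 1) ^ s) * mhStar t (n + 1) := by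
  show (∑ k ∈ Finset.Icc 1 (n + 1), (1 / (k : ℝ) ^ s) * mhStar t k) = _
  rw [Finset.sum_Icc_succ_top (by omega : 1 ≤ n + 1)]
  push_cast
  rfl

lemma hS_zero (n : ℕ) : hS 0 n = 1 := rfl

lemma hS_succ_zero (b : ℕ) : hS (b + 1) 0 = 0 := by
  simp [hS, List.replicate_succ, mhStar]

lemma hS_succ_succ (b n : ℕ) :
    hS (b + 1) (n + 1) = hS (b + 1) n + (1 / ((n : ℝ) + 1)) * hS b (n + 1) := by
  have h := mhStar_cons_succ 1 (List.replicate b 1) n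
  rw [Real.rpow_one] at h
  simpa [hS, List.replicate_succ] using h

lemma pS_zero (s : ℕ) : pS s 0 = 0 := by simp [pS]

lemma pS_succ (s n : ℕ) :
    pS s (n + 1) = pS s n + (1 / ((n : ℝ) + 1)) ^ s := by
  unfold pS
  rw [Finset.sum_Icc_succ_top (by omega : 1 ≤ n + 1)]
  push_cast
  rw [one_div, one_div, inv_pow]

lemma L_step (m n : ℕ) :
    LL (m + 1) (n + 1) = LL (m + 1) n + (1 / ((n : ℝ) + 1)) * LL m (n + 1)
      + (1 / ((n : ℝ) + 1)) ^ 2 * hS m (n + 1) := by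
  have e2 : ((1 : ℝ) / ((n : ℝ) + 1) ^ (2 : ℝ)) = (1 / ((n : ℝ) + 1)) ^ 2 := by
    rw [show (2 : ℝ) = ((2 : ℕ) : ℝ) by norm_num, Real.rpow_natCast]
    rw [one_div, one_div, inv_pow]
  unfold LL
  rw [Finset.sum_range_succ' (fun i =>
      mhStar (List.replicate i 1 ++ 2 :: List.replicate (m + 1 - 1 - i) 1) (n + 1)) m]
  rw [Finset.sum_range_succ' (fun i =>
      mhStar (List.replicate i 1 ++ 2 :: List.replicate (m + 1 - 1 - i) 1) n) m]
  have key1 : ∀ i ∈ Finset.range m,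
      mhStar (List.replicate (i + 1) 1 ++ 2 :: List.replicate (m + 1 - 1 - (i + 1)) 1) (n + 1)
        = mhStar (List.replicate (i + 1) 1 ++ 2 :: List.replicate (m + 1 - 1 - (i + 1)) 1) n
          + (1 / ((n : ℝ) + 1)) *
            mhStar (List.replicate i 1 ++ 2 :: List.replicate (m - 1 - i) 1) (n + 1) := by
    intro i hi
    have hl : List.replicate (i + 1) (1 : ℝ) ++ 2 :: List.replicate (m + 1 - 1 - (i + 1)) 1
        = 1 :: (List.replicate i 1 ++ 2 :: List.replicate (m - 1 - i) 1) := by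
      rw [List.replicate_succ, List.cons_append]
      have : m + 1 - 1 - (i + 1) = m - 1 - i := by omega
      rw [this]
    rw [hl, mhStar_cons_succ, Real.rpow_one]
  rw [Finset.sum_congr rfl key1]
  have key0 : mhStar (List.replicate 0 (1 : ℝ) ++ 2 :: List.replicate (m + 1 - 1 - 0) 1) (n + 1)
      = mhStar (List.replicate 0 (1 : ℝ) ++ 2 :: List.replicate (m + 1 - 1 - 0) 1) n
        + (1 / ((n : ℝ) + 1)) ^ 2 * hS m (n + 1) := by
    have : List.replicate 0 (1 : ℝ) ++ 2 :: List.replicate (m + 1 - 1 - 0) 1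
        = 2 :: List.replicate m 1 := by simp
    rw [this, mhStar_cons_succ, ← e2]
    rfl
  rw [key0, Finset.sum_add_distrib, ← Finset.mul_sum]
  ring

lemma R_step (m n : ℕ) :
    RR (m + 1) (n + 1) = RR (m + 1) n + (1 / ((n : ℝ) + 1)) * RR m (n + 1)
      + (1 / ((n : ℝ) + 1)) ^ 2 * hS m (n + 1) := by
  set q : ℝ := 1 / ((n : ℝ) + 1) with hq
  unfold RR
  -- expand pS at n+1
  have expand : ∀ i ∈ Finset.range (m + 1),
      pS (m + 1 + 1 - i) (n + 1) * hS i (n + 1)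
        = pS (m + 1 + 1 - i) n * hS i (n + 1) + q ^ (m + 1 + 1 - i) * hS i (n + 1) := by
    intro i hi
    rw [pS_succ]; ring
  rw [Finset.sum_congr rfl expand, Finset.sum_add_distrib]
  -- part A
  have hA : (∑ i ∈ Finset.range (m + 1), pS (m + 1 + 1 - i) n * hS i (n + 1))
      = (∑ i ∈ Finset.range (m + 1), pS (m + 1 + 1 - i) n * hS i n)
        + q * ∑ i ∈ Finset.range m, pS (m + 1 - i) n * hS i (n + 1) := by
    rw [Finset.sum_range_succ' (fun i => pS (m + 1 + 1 - i) n * hS i (n + 1)) m]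
    rw [Finset.sum_range_succ' (fun i => pS (m + 1 + 1 - i) n * hS i n) m]
    have : ∀ i ∈ Finset.range m,
        pS (m + 1 + 1 - (i + 1)) n * hS (i + 1) (n + 1)
          = pS (m + 1 + 1 - (i + 1)) n * hS (i + 1) n
            + q * (pS (m + 1 - i) n * hS i (n + 1)) := by
      intro i hi
      rw [hS_succ_succ]
      have : m + 1 + 1 - (i + 1) = m + 1 - i := by omega
      rw [this]; ring
    rw [Finset.sum_congr rfl this, Finset.sum_add_distrib, ← Finset.mul_sum]
    have h0 : hS 0 (n + 1) = hS 0 n := rfl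
    rw [h0]; ring
  -- part B
  have hB : (∑ i ∈ Finset.range (m + 1), q ^ (m + 1 + 1 - i) * hS i (n + 1))
      = q * ∑ i ∈ Finset.range m, q ^ (m + 1 - i) * hS i (n + 1)
        + q ^ 2 * hS m (n + 1) := by
    have : ∀ i ∈ Finset.range (m + 1),
        q ^ (m + 1 + 1 - i) * hS i (n + 1) = q * (q ^ (m + 1 - i) * hS i (n + 1)) := by
      intro i hi
      simp only [Finset.mem_range] at hi
      have : m + 1 + 1 - i = (m + 1 - i) + 1 := by omega
      rw [this, pow_succ]; ring
    rw [Finset.sum_congr rfl this, ← Finset.mul_sum, Finset.sum_range_succ]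
    have : m + 1 - m = 1 := by omega
    rw [this, pow_one]; ring
  rw [hA, hB]
  -- expand RR m (n+1)
  have hC : (∑ i ∈ Finset.range m, pS (m + 1 - i) (n + 1) * hS i (n + 1))
      = (∑ i ∈ Finset.range m, pS (m + 1 - i) n * hS i (n + 1))
        + ∑ i ∈ Finset.range m, q ^ (m + 1 - i) * hS i (n + 1) := by
    rw [← Finset.sum_add_distrib]
    refine Finset.sum_congr rfl fun i hi => ?_
    rw [pS_succ]; ring
  rw [hC]
  ring

lemma key_lemma : ∀ m n, LL m n = RR m n := by
  intro m
  induction m with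
  | zero => intro n; simp [LL, RR]
  | succ m IHm =>
    intro n
    induction n with
    | zero =>
      have hl : LL (m + 1) 0 = 0 := by
        unfold LL
        refine Finset.sum_eq_zero fun i hi => mhStar_zero _ ?_
        cases h : List.replicate i (1 : ℝ) with
        | nil => simp
        | cons a t => simp
      have hr : RR (m + 1) 0 = 0 := by
        unfold RR
        refine Finset.sum_eq_zero fun i hi => ?_
        rw [pS_zero, zero_mul]
      rw [hl, hr]
    | succ n IHn =>
      rw [L_step, R_step, IHn, IHm]

theorem stmt_15 (n m : ℕ) (hn : 1 ≤ n) (hm : 1 ≤ m) :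
    ∑ i ∈ Finset.Icc 1 m,
        mhStar (List.replicate (i - 1) 1 ++ 2 :: List.replicate (m - i) 1) n
      = ∑ i ∈ Finset.Icc 1 m,
          (∑ j ∈ Finset.Icc 1 n, (1 : ℝ) / (j : ℝ) ^ (m + 2 - i))
            * mhStar (List.replicate (i - 1) 1) n := by
  have h := key_lemma m n
  unfold LL RR at h
  rw [← Finset.Ico_add_one_right_eq_Icc, Finset.sum_Ico_eq_sum_range,
    Finset.sum_Ico_eq_sum_range (f := fun i =>
      (∑ j ∈ Finset.Icc 1 n, (1 : ℝ) / (j : ℝ) ^ (m + 2 - i))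
        * mhStar (List.replicate (i - 1) 1) n)]
  refine Eq.trans ?_ (h.trans ?_)
  · refine Finset.sum_congr rfl fun i hi => ?_
    have e1 : 1 + i - 1 = i := by omega
    have e2 : m - (1 + i) = m - 1 - i := by omega
    rw [e1, e2]
  · refine Finset.sum_congr rfl fun i hi => ?_
    rw [show m + 2 - (1 + i) = m + 1 - i by omega, show 1 + i - 1 = i by omega]
    rfl
end

section
/- For all integers n ≥ 0 and m ≥ 0, the multiple harmonic star number satisfies ζ*_n({1}_m) = Y_m(n)/m!, where Y_m(n) is the complete exponential Bell polynomial evaluated at (H_n, 1!·ζ_n(2), 2!·ζ_n(3), …, (r-1)!·ζ_n(r), …). -/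
open Finset

/-- Complete exponential Bell polynomials, via the standard recurrence
`Y_{n+1} = ∑_{i=0}^{n} C(n,i) x_{n+1-i} Y_i`, `Y_0 = 1`. -/
noncomputable def bell (x : ℕ → ℝ) : ℕ → ℝ
  | 0 => 1
  | n + 1 => ∑ i : Fin (n + 1), (n.choose i : ℝ) * x (n + 1 - i) * bell x i
  termination_by n => n
  decreasing_by exact i.isLt

noncomputable def Xfun (n : ℕ) : ℕ → ℝ :=
  fun r => (Nat.factorial (r - 1) : ℝ) * ∑ j ∈ Finset.Icc 1 n, (1 : ℝ) / (j : ℝ) ^ r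

lemma bell_succ (x : ℕ → ℝ) (m : ℕ) :
    bell x (m+1) = ∑ i ∈ range (m+1), (m.choose i : ℝ) * x (m+1-i) * bell x i := by
  rw [bell.eq_2]
  exact Fin.sum_univ_eq_sum_range (fun i => (m.choose i : ℝ) * x (m+1-i) * bell x i) (m+1)

lemma Xfun_zero (r : ℕ) : Xfun 0 r = 0 := by simp [Xfun]

lemma Xfun_succ (n : ℕ) {r : ℕ} (hr : 1 ≤ r) :
    Xfun (n+1) r = Xfun n r + (Nat.factorial (r-1) : ℝ) * (1/((n:ℝ)+1))^r := by
  unfold Xfun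
  rw [Finset.sum_Icc_succ_top (by omega), mul_add]
  congr 2
  push_cast
  rw [div_pow, one_pow]

lemma choose_fact (s i : ℕ) (h : i ≤ s) :
    ((s+1).choose i : ℝ) * (Nat.factorial (s+1-i) : ℝ)
      = ((s:ℝ)+1) * (s.choose i : ℝ) * (Nat.factorial (s-i) : ℝ) := by
  have hnat : (s+1).choose i * Nat.factorial (s+1-i) * Nat.factorial i
      = (s+1) * (s.choose i * Nat.factorial (s-i)) * Nat.factorial i := by
    have h1 : (s+1).choose i * Nat.factorial i * Nat.factorial (s+1-i) = Nat.factorial (s+1) :=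
      Nat.choose_mul_factorial_mul_factorial (Nat.le_succ_of_le h)
    have h2 : s.choose i * Nat.factorial i * Nat.factorial (s-i) = Nat.factorial s :=
      Nat.choose_mul_factorial_mul_factorial h
    calc (s+1).choose i * Nat.factorial (s+1-i) * Nat.factorial i
        = (s+1).choose i * Nat.factorial i * Nat.factorial (s+1-i) := by ring
      _ = Nat.factorial (s+1) := h1
      _ = (s+1) * Nat.factorial s := Nat.factorial_succ s
      _ = (s+1) * (s.choose i * Nat.factorial i * Nat.factorial (s-i)) := by rw [h2]
      _ = (s+1) * (s.choose i * Nat.factorial (s-i)) * Nat.factorial i := by ring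
  have hi : (Nat.factorial i : ℝ) ≠ 0 := Nat.cast_ne_zero.2 (Nat.factorial_ne_zero i)
  apply mul_right_cancel₀ hi
  have := congrArg (fun t : ℕ => (t : ℝ)) hnat
  push_cast at this
  linarith [this]

lemma choose_mul (s i : ℕ) :
    (((s+1).choose (i+1) : ℕ) : ℝ) * ((i:ℝ)+1) = ((s:ℝ)+1) * (s.choose i : ℝ) := by
  have := Nat.add_one_mul_choose_eq s i
  exact_mod_cast this.symm

lemma keyD (n : ℕ) (m : ℕ) :
    bell (Xfun (n+1)) m
      = bell (Xfun n) m + (m:ℝ) * (1/((n:ℝ)+1)) * bell (Xfun (n+1)) (m-1) := by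
  induction m using Nat.strong_induction_on with
  | _ m ih =>
    match m, ih with
    | 0, _ => simp [bell.eq_1]
    | 1, _ =>
      have h1 : bell (Xfun (n+1)) 1 = Xfun (n+1) 1 := by
        rw [bell_succ]; simp [bell.eq_1]
      have h2 : bell (Xfun n) 1 = Xfun n 1 := by
        rw [bell_succ]; simp [bell.eq_1]
      rw [h1, h2, Xfun_succ n (r := 1) le_rfl]
      norm_num [bell.eq_1, Nat.factorial]
    | (s+2), ih =>
      set c : ℝ := 1/((n:ℝ)+1) with hc
      set a := Xfun n with ha
      set b := Xfun (n+1) with hb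
      set t := s + 1 with ht
      -- per-term difference identity
      have hstep : ∀ i ∈ range (t+1),
          (t.choose i : ℝ) * b (t+1-i) * bell b i - (t.choose i : ℝ) * a (t+1-i) * bell a i
            = (t.choose i : ℝ) * (Nat.factorial (t-i) : ℝ) * c^(t+1-i) * bell b i
              + (t.choose i : ℝ) * (i:ℝ) * c * a (t+1-i) * bell b (i-1) := by
        intro i hi
        rw [mem_range] at hi
        have h1 : b (t+1-i) = a (t+1-i) + (Nat.factorial (t-i) : ℝ) * c^(t+1-i) := by
          have he : t+1-i-1 = t-i := by omega
          have := Xfun_succ n (r := t+1-i) (by omega)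
          rw [he] at this
          rw [hb, ha, this, hc]
        have h2 : bell a i = bell b i - (i:ℝ) * c * bell b (i-1) := by
          have := ih i (by omega)
          rw [this]; ring
        rw [h1, h2]; ring
      have hdiff : bell b (t+1) - bell a (t+1)
          = (∑ i ∈ range (t+1),
              (t.choose i : ℝ) * (Nat.factorial (t-i) : ℝ) * c^(t+1-i) * bell b i)
            + ∑ i ∈ range (t+1),
              (t.choose i : ℝ) * (i:ℝ) * c * a (t+1-i) * bell b (i-1) := by
        rw [bell_succ b t, bell_succ a t, ← Finset.sum_sub_distrib, ← Finset.sum_add_distrib]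
        exact Finset.sum_congr rfl hstep
      set Sa : ℝ := ∑ i ∈ range t, (s.choose i : ℝ) * a (t-i) * bell b i with hSa
      set Sc : ℝ := ∑ i ∈ range t,
        (s.choose i : ℝ) * (Nat.factorial (s-i) : ℝ) * c^(t-i) * bell b i with hSc
      have hbt : bell b t = Sa + Sc := by
        rw [ht, bell_succ b s, ← Finset.sum_add_distrib]
        refine Finset.sum_congr rfl ?_
        intro i hi
        rw [mem_range] at hi
        have h1 : b (s+1-i) = a (s+1-i) + (Nat.factorial (s-i) : ℝ) * c^(s+1-i) := by
          have he : s+1-i-1 = s-i := by omega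
          have := Xfun_succ n (r := s+1-i) (by omega)
          rw [he] at this
          rw [hb, ha, this, hc]
        rw [h1]; ring
      have hT1 : (∑ i ∈ range (t+1),
            (t.choose i : ℝ) * (Nat.factorial (t-i) : ℝ) * c^(t+1-i) * bell b i)
          = (t:ℝ) * c * Sc + c * bell b t := by
        rw [Finset.sum_range_succ]
        have hlast : (t.choose t : ℝ) * (Nat.factorial (t-t) : ℝ) * c^(t+1-t) * bell b t
            = c * bell b t := by
          have h1 : t+1-t = 1 := by omega
          rw [Nat.choose_self, Nat.sub_self, h1, pow_one, Nat.factorial_zero]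
          norm_num
        rw [hlast]
        congr 1
        rw [hSc, Finset.mul_sum]
        refine Finset.sum_congr rfl ?_
        intro i hi
        rw [mem_range] at hi
        have hcf := choose_fact s i (by omega)
        have he1 : t + 1 - i = (t - i) + 1 := by omega
        have he2 : (t : ℕ) - i = s + 1 - i := by omega
        rw [he1, pow_succ]
        rw [show (t.choose i : ℝ) = ((s+1).choose i : ℝ) by rw [ht]]
        rw [show (Nat.factorial (t-i) : ℝ) = (Nat.factorial (s+1-i) : ℝ) by rw [he2]]
        have hts : (t : ℝ) = (s:ℝ)+1 := by rw [ht]; push_cast; ring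
        rw [hts]
        linear_combination (c^(t-i) * c * bell b i) * hcf
      have hT2 : (∑ i ∈ range (t+1),
            (t.choose i : ℝ) * (i:ℝ) * c * a (t+1-i) * bell b (i-1))
          = (t:ℝ) * c * Sa := by
        rw [Finset.sum_range_succ']
        simp only [Nat.cast_zero, mul_zero, zero_mul, add_zero]
        rw [hSa, Finset.mul_sum]
        refine Finset.sum_congr rfl ?_
        intro i hi
        rw [mem_range] at hi
        have he1 : t + 1 - (i+1) = t - i := by omega
        have he2 : (i+1) - 1 = i := by omega
        rw [he1, he2]
        have hcm := choose_mul s i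
        have hts : (t : ℝ) = (s:ℝ)+1 := by rw [ht]; push_cast; ring
        rw [show (t.choose (i+1) : ℝ) = ((s+1).choose (i+1) : ℝ) by rw [ht]]
        rw [show ((i+1 : ℕ) : ℝ) = (i:ℝ)+1 by push_cast; ring]
        rw [hts]
        linear_combination (c * a (t-i) * bell b i) * hcm
      have hgoal : bell b (t+1) = bell a (t+1) + ((t:ℝ)+1) * c * bell b t := by
        have : bell b (t+1) - bell a (t+1)
            = ((t:ℝ) * c * Sc + c * bell b t) + (t:ℝ) * c * Sa := by
          rw [hdiff, hT1, hT2]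
        linear_combination this - (t:ℝ)*c*hbt
      have hcast : ((s+2 : ℕ) : ℝ) = (t:ℝ)+1 := by rw [ht]; push_cast; ring
      have hsub : (s+2) - 1 = t := by omega
      rw [hsub, hcast]
      have e : s+2 = t+1 := by omega
      rw [e]
      exact hgoal

lemma keyU (m n : ℕ) :
    bell (Xfun n) (m+1) / (Nat.factorial (m+1) : ℝ)
      = ∑ k ∈ Icc 1 n, (1/(k:ℝ)) * (bell (Xfun k) m / (Nat.factorial m : ℝ)) := by
  induction n with
  | zero =>
    have h0 : bell (Xfun 0) (m+1) = 0 := by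
      rw [bell_succ]
      refine Finset.sum_eq_zero ?_
      intro i hi
      rw [Xfun_zero]
      ring
    simp [h0]
  | succ n ihn =>
    rw [Finset.sum_Icc_succ_top (by omega), ← ihn]
    have hD := keyD n (m+1)
    have hsub : (m+1) - 1 = m := by omega
    rw [hsub] at hD
    rw [hD]
    have hf : (Nat.factorial (m+1) : ℝ) = ((m:ℝ)+1) * (Nat.factorial m : ℝ) := by
      rw [Nat.factorial_succ]; push_cast; ring
    have hm1 : ((m+1 : ℕ) : ℝ) = (m:ℝ)+1 := by push_cast; ring
    have hn1 : ((n+1 : ℕ) : ℝ) = (n:ℝ)+1 := by push_cast; ring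
    rw [hf, hm1, hn1]
    have hfm : (Nat.factorial m : ℝ) ≠ 0 := Nat.cast_ne_zero.2 (Nat.factorial_ne_zero m)
    have hmm : ((m:ℝ)+1) ≠ 0 := by positivity
    have hnn : ((n:ℝ)+1) ≠ 0 := by positivity
    field_simp

theorem stmt_16 (n m : ℕ) :
    mhStar (List.replicate m 1) n
      = bell (fun r => (Nat.factorial (r - 1) : ℝ) * ∑ j ∈ Finset.Icc 1 n, (1 : ℝ) / (j : ℝ) ^ r) m
          / (Nat.factorial m : ℝ) := by
  show mhStar (List.replicate m 1) n = bell (Xfun n) m / (Nat.factorial m : ℝ)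
  induction m generalizing n with
  | zero => simp [mhStar, bell.eq_1]
  | succ m ihm =>
    rw [List.replicate_succ, mhStar]
    rw [keyU m n]
    refine Finset.sum_congr rfl ?_
    intro k hk
    rw [mem_Icc] at hk
    rw [ihm k, Real.rpow_one]
end
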